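/- arXiv:1811.07228 — 6 statements merged into one kernel-verified Lean document; each statement's English description precedes it below -/
import Mathlib

section
/- Let N > 0 and t' ≥ 0. Let I : (0,∞) → [0,∞) be a nonincreasing function and let E : (0,∞) → ℝ satisfy the dissipation identity E(s) − E(t) = ∫_s^t I(r) dr for all 0 < s < t. Assume moreover that (t+t')² I(t) ≤ (s+t')² I(s) + (N/2)(t−s) for all 0 < s < t. Then the function W(t) := (t+t') I(t) − E(t) − (N/2) log(t+t') is nonincreasing on (0,∞). -/
open MeasureTheory intervalIntegral Real

/-- Real-variable core of the monotonicity of the W-entropy along heat flow: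
if `I` is nonincreasing and nonnegative on `(0,∞)`, `E` satisfies the entropy
dissipation identity, and the rescaled Fisher information control holds, then
`W(t) = (t+t') I(t) - E(t) - (N/2) log (t+t')` is nonincreasing on `(0,∞)`. -/
theorem w_entropy_monotone
    (N t' : ℝ) (hN : 0 < N) (ht' : 0 ≤ t')
    (I E : ℝ → ℝ)
    (hInonneg : ∀ t, 0 < t → 0 ≤ I t)
    (hImono : ∀ s t, 0 < s → s ≤ t → I t ≤ I s)
    (hdiss : ∀ s t, 0 < s → s < t → E s - E t = ∫ r in s..t, I r)
    (hctrl : ∀ s t, 0 < s → s < t →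
      (t + t') ^ 2 * I t ≤ (s + t') ^ 2 * I s + N / 2 * (t - s)) :
    ∀ s t, 0 < s → s ≤ t →
      (t + t') * I t - E t - N / 2 * Real.log (t + t')
        ≤ (s + t') * I s - E s - N / 2 * Real.log (s + t') := by
  intro s t hs hst
  rcases eq_or_lt_of_le hst with rfl | hlt
  · exact le_refl _
  have ht : 0 < t := lt_trans hs hlt
  set a : ℝ := s + t' with ha_def
  set b : ℝ := t + t' with hb_def
  have ha : 0 < a := by simp [ha_def]; linarith
  have hb : 0 < b := by simp [hb_def]; linarith
  have hab : a < b := by simp [ha_def, hb_def]; linarith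
  -- the comparison function g and its antiderivative G
  set g : ℝ → ℝ := fun r => (a ^ 2 * I s + N / 2 * (r - s)) / (r + t') ^ 2 with hg_def
  set G : ℝ → ℝ := fun x =>
    -(a ^ 2 * I s) * (x + t')⁻¹ + N / 2 * (Real.log (x + t') + a * (x + t')⁻¹) with hG_def
  have huIcc : Set.uIcc s t = Set.Icc s t := Set.uIcc_of_le hst
  have hpos : ∀ r ∈ Set.Icc s t, 0 < r + t' := fun r hr => by
    have := hr.1; linarith
  have hderiv : ∀ r ∈ Set.uIcc s t, HasDerivAt G (g r) r := by
    intro r hr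
    rw [huIcc] at hr
    have hrpos : 0 < r + t' := hpos r hr
    have hne : r + t' ≠ 0 := ne_of_gt hrpos
    have h0 : HasDerivAt (fun x : ℝ => x + t') 1 r := (hasDerivAt_id r).add_const t'
    have hinv : HasDerivAt (fun x : ℝ => (x + t')⁻¹) (-1 / (r + t') ^ 2) r := h0.inv hne
    have hlog : HasDerivAt (fun x : ℝ => Real.log (x + t')) (1 / (r + t')) r := h0.log hne
    have := ((hinv.const_mul (-(a ^ 2 * I s))).add
      ((hlog.add (hinv.const_mul a)).const_mul (N / 2)))
    refine this.congr_deriv ?_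
    rw [hg_def]
    field_simp
    ring
  have hg_cont : ContinuousOn g (Set.uIcc s t) := by
    rw [huIcc]
    apply ContinuousOn.div
    · fun_prop
    · fun_prop
    · intro r hr
      exact pow_ne_zero 2 (ne_of_gt (hpos r hr))
  have hg_int : IntervalIntegrable g volume s t := hg_cont.intervalIntegrable
  have hI_int : IntervalIntegrable I volume s t := by
    apply AntitoneOn.intervalIntegrable
    intro x hx y hy hxy
    rw [huIcc] at hx
    exact hImono x y (lt_of_lt_of_le hs hx.1) hxy
  have hle : ∀ r ∈ Set.Icc s t, I r ≤ g r := by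
    intro r hr
    have hrpos : 0 < r + t' := hpos r hr
    rcases eq_or_lt_of_le hr.1 with rfl | hsr
    · rw [hg_def]
      simp only [sub_self, mul_zero, add_zero, ha_def]
      rw [mul_div_cancel_left₀ _ (pow_ne_zero 2 hrpos.ne')]
    · have h := hctrl s r hs hsr
      rw [hg_def]
      rw [le_div_iff₀ (by positivity)]
      calc I r * (r + t') ^ 2 = (r + t') ^ 2 * I r := by ring
        _ ≤ a ^ 2 * I s + N / 2 * (r - s) := h
  have hint_le : (∫ r in s..t, I r) ≤ ∫ r in s..t, g r :=
    intervalIntegral.integral_mono_on hst hI_int hg_int hle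
  have hFTC : (∫ r in s..t, g r) = G t - G s :=
    intervalIntegral.integral_eq_sub_of_hasDerivAt hderiv hg_int
  have hGval : G t - G s = -(a ^ 2 * I s) * b⁻¹ + N / 2 * (Real.log b + a * b⁻¹)
      - (-(a * I s) + N / 2 * (Real.log a + 1)) := by
    rw [hG_def]
    simp only
    rw [← ha_def, ← hb_def]
    field_simp
  have hEdiff : E s - E t ≤ G t - G s := by
    rw [hdiss s t hs hlt, ← hFTC]; exact hint_le
  have hkey := hctrl s t hs hlt
  rw [← ha_def, ← hb_def] at hkey
  have htsub : t - s = b - a := by rw [ha_def, hb_def]; ring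
  rw [htsub] at hkey
  rw [hGval] at hEdiff
  -- final algebra
  have hfinal : b * I t + (-(a ^ 2 * I s) * b⁻¹ + N / 2 * (Real.log b + a * b⁻¹)
      - (-(a * I s) + N / 2 * (Real.log a + 1))) - a * I s
      - N / 2 * (Real.log b - Real.log a) ≤ 0 := by
    have hbne : b ≠ 0 := ne_of_gt hb
    have h2 : b * (b * I t - a ^ 2 * I s * b⁻¹ + N / 2 * (a * b⁻¹ - 1))
        = b ^ 2 * I t - a ^ 2 * I s + N / 2 * (a - b) := by
      field_simp
    nlinarith [hb, hkey]
  have hlogb : Real.log (t + t') = Real.log b := by rw [hb_def]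
  have hloga : Real.log (s + t') = Real.log a := by rw [ha_def]
  rw [hlogb, hloga]
  clear_value a b
  linarith [hEdiff, hfinal]
end

section
/- Let N ∈ [1,∞) and let f : [0,∞) → ℝ be a measurable function such that ∫₀^∞ r^n |f(r)| e^{−r/2} dr < ∞ for all n ∈ ℕ. Suppose that ((N+2)/2) ∫₀^∞ f(r) e^{−ξ r} dr = ξ ∫₀^∞ r f(r) e^{−ξ r} dr holds for every ξ ∈ (1/2, 2). Then there exists a constant c₁ ∈ ℝ such that f(r) = c₁ r^{N/2} for almost every r ∈ [0,∞). -/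
open MeasureTheory Real Set Filter SchwartzMap
open scoped FourierTransform ContDiff

/- ### Auxiliary lemmas -/

lemma lap_norm_eq (u : ℝ → ℝ) (s : ℂ) (n : ℕ) (r : ℝ) :
    ‖(r:ℂ) ^ n * (u r : ℂ) * Complex.exp (-(s * r))‖
      = |r| ^ n * |u r| * Real.exp (-(s.re * r)) := by
  rw [norm_mul, norm_mul, norm_pow]
  simp [Complex.norm_exp, Complex.norm_real]

lemma lap_meas (u : ℝ → ℝ) (hu : Measurable u) (s : ℂ) (n : ℕ) :
    Measurable (fun r : ℝ => (r:ℂ) ^ n * (u r : ℂ) * Complex.exp (-(s * r))) := by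
  exact ((Complex.measurable_ofReal.pow_const n).mul
    (Complex.measurable_ofReal.comp hu)).mul
    (Complex.measurable_exp.comp ((Complex.measurable_ofReal.const_mul s).neg))

lemma lap_integrable {u : ℝ → ℝ} (hu : Measurable u) {n : ℕ}
    (hn : IntegrableOn (fun r => r ^ n * |u r| * Real.exp (-r / 2)) (Set.Ici 0))
    {s : ℂ} (hs : 1/2 ≤ s.re) :
    IntegrableOn (fun r : ℝ => (r:ℂ) ^ n * (u r : ℂ) * Complex.exp (-(s * r))) (Set.Ici 0) := by
  refine Integrable.mono' hn ((lap_meas u hu s n).aestronglyMeasurable) ?_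
  filter_upwards [ae_restrict_mem measurableSet_Ici] with r hr
  rw [lap_norm_eq]
  have hr0 : (0:ℝ) ≤ r := hr
  rw [abs_of_nonneg hr0]
  have h2 : Real.exp (-(s.re * r)) ≤ Real.exp (-r / 2) := by
    apply Real.exp_le_exp.2; nlinarith
  exact mul_le_mul_of_nonneg_left h2 (by positivity)

lemma lap_integrable_real {u : ℝ → ℝ} (hu : Measurable u) {n : ℕ}
    (hn : IntegrableOn (fun r => r ^ n * |u r| * Real.exp (-r / 2)) (Set.Ici 0))
    {ξ : ℝ} (hs : 1/2 ≤ ξ) :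
    IntegrableOn (fun r => r ^ n * u r * Real.exp (-(ξ * r))) (Set.Ici 0) := by
  refine Integrable.mono' hn ?_ ?_
  · exact (((measurable_id.pow_const n).mul hu).mul
      (Real.measurable_exp.comp (measurable_const.mul measurable_id).neg)).aestronglyMeasurable
  · filter_upwards [ae_restrict_mem measurableSet_Ici] with r hr
    have hr0 : (0:ℝ) ≤ r := hr
    have h2 : Real.exp (-(ξ * r)) ≤ Real.exp (-r / 2) := by
      apply Real.exp_le_exp.2; nlinarith
    calc ‖r ^ n * u r * Real.exp (-(ξ * r))‖
        = r ^ n * |u r| * Real.exp (-(ξ * r)) := by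
          rw [Real.norm_eq_abs, abs_mul, abs_mul, abs_pow, abs_of_nonneg hr0,
            abs_of_nonneg (Real.exp_pos _).le]
      _ ≤ r ^ n * |u r| * Real.exp (-r / 2) := mul_le_mul_of_nonneg_left h2 (by positivity)

lemma lap_hasDerivAt {u : ℝ → ℝ} (hu : Measurable u)
    (h0 : IntegrableOn (fun r => r ^ 0 * |u r| * Real.exp (-r / 2)) (Set.Ici 0))
    (h1 : IntegrableOn (fun r => r ^ 1 * |u r| * Real.exp (-r / 2)) (Set.Ici 0))
    {s : ℂ} (hs : 1/2 < s.re) :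
    HasDerivAt (fun z : ℂ => ∫ r in Set.Ici (0:ℝ), (u r : ℂ) * Complex.exp (-(z * r)))
      (∫ r in Set.Ici (0:ℝ), -((r:ℂ) * (u r : ℂ) * Complex.exp (-(s * r)))) s := by
  have hε : (0:ℝ) < s.re - 1/2 := by linarith
  have key := hasDerivAt_integral_of_dominated_loc_of_deriv_le (μ := volume.restrict (Set.Ici 0))
    (F := fun (z : ℂ) (r : ℝ) => (u r : ℂ) * Complex.exp (-(z * r)))
    (F' := fun (z : ℂ) (r : ℝ) => -((r:ℂ) * (u r : ℂ) * Complex.exp (-(z * r))))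
    (x₀ := s) (bound := fun r => r ^ 1 * |u r| * Real.exp (-r / 2)) (Metric.ball_mem_nhds s hε)
    ?_ ?_ ?_ ?_ ?_ ?_
  · exact key.2
  · filter_upwards with z
    have := lap_meas u hu z 0
    simpa using this.aestronglyMeasurable
  · have := lap_integrable hu h0 (s := s) hs.le
    simpa [IntegrableOn] using this
  · have := (lap_meas u hu s 1).neg
    refine this.aestronglyMeasurable.congr ?_
    filter_upwards with r
    simp
  · filter_upwards [ae_restrict_mem measurableSet_Ici] with r hr z hz
    have hz2 : 1/2 ≤ z.re := by
      rw [Metric.mem_ball, Complex.dist_eq] at hz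
      have h3 : |(z - s).re| < s.re - 1/2 :=
        lt_of_le_of_lt (Complex.abs_re_le_norm _) hz
      rw [Complex.sub_re] at h3
      have := abs_lt.1 h3
      linarith [this.1]
    have hr0 : (0:ℝ) ≤ r := hr
    calc ‖-((r:ℂ) * (u r : ℂ) * Complex.exp (-(z * r)))‖
        = ‖(r:ℂ) ^ 1 * (u r : ℂ) * Complex.exp (-(z * r))‖ := by rw [norm_neg, pow_one]
      _ = |r| ^ 1 * |u r| * Real.exp (-(z.re * r)) := lap_norm_eq u z 1 r
      _ ≤ r ^ 1 * |u r| * Real.exp (-r / 2) := by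
          rw [abs_of_nonneg hr0]
          refine mul_le_mul_of_nonneg_left ?_ (by positivity)
          apply Real.exp_le_exp.2; nlinarith
  · exact h1
  · filter_upwards with r z _
    have h2 : HasDerivAt (fun z : ℂ => -(z * r)) (-(r:ℂ)) z := by
      simpa [Pi.neg_def] using ((hasDerivAt_id z).mul_const (r:ℂ)).neg
    have h3 := (h2.cexp).const_mul (u r : ℂ)
    refine h3.congr_deriv ?_
    ring

lemma lap_ofReal (u : ℝ → ℝ) (ξ : ℝ) :
    ∫ r in Set.Ici (0:ℝ), (u r : ℂ) * Complex.exp (-((ξ:ℂ) * r))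
      = ((∫ r in Set.Ici (0:ℝ), u r * Real.exp (-(ξ * r)) : ℝ) : ℂ) := by
  have h : (fun r : ℝ => (u r : ℂ) * Complex.exp (-((ξ:ℂ) * r)))
      = fun r : ℝ => ((u r * Real.exp (-(ξ * r)) : ℝ) : ℂ) := by
    funext r
    push_cast [Complex.ofReal_exp]
    ring
  rw [h]
  exact integral_ofReal

lemma w_moment {N : ℝ} (hN : 0 ≤ N) (n : ℕ) :
    IntegrableOn (fun r : ℝ => r ^ n * |r ^ (N/2)| * Real.exp (-r / 2)) (Set.Ici 0) := by
  rw [integrableOn_Ici_iff_integrableOn_Ioi]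
  have base := integrableOn_rpow_mul_exp_neg_mul_rpow
    (s := (n : ℝ) + N/2) (p := 1) (b := 1/2)
    (lt_of_lt_of_le (by norm_num) (by positivity : (0:ℝ) ≤ (n:ℝ) + N/2)) zero_lt_one (by norm_num)
  refine base.congr_fun (fun r hr => ?_) measurableSet_Ioi
  have hr0 : (0:ℝ) < r := hr
  dsimp only
  rw [Real.rpow_one, Real.rpow_add hr0, Real.rpow_natCast,
    abs_of_nonneg (Real.rpow_nonneg hr0.le _)]
  ring_nf

lemma g_moment {f : ℝ → ℝ} (hf : Measurable f) {N : ℝ} (hN : 0 ≤ N) (c₁ : ℝ)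
    (hint : ∀ n : ℕ,
      IntegrableOn (fun r => r ^ n * |f r| * Real.exp (-r / 2)) (Set.Ici 0)) (n : ℕ) :
    IntegrableOn
      (fun r : ℝ => r ^ n * |f r - c₁ * r ^ (N/2)| * Real.exp (-r / 2)) (Set.Ici 0) := by
  refine Integrable.mono' (((hint n)).add ((w_moment hN n).const_mul |c₁|)) ?_ ?_
  · apply Measurable.aestronglyMeasurable
    apply Measurable.mul
    apply Measurable.mul (measurable_id.pow_const n)
    · exact (hf.sub
        (((continuous_id.rpow_const (fun x => Or.inr (by positivity))).measurable).const_mul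
          c₁)).abs
    · exact Real.measurable_exp.comp (measurable_id.neg.div_const 2)
  · filter_upwards [ae_restrict_mem measurableSet_Ici] with r hr
    have hr0 : (0:ℝ) ≤ r := hr
    have habs : |f r - c₁ * r ^ (N/2)| ≤ |f r| + |c₁| * |r ^ (N/2)| := by
      calc |f r - c₁ * r ^ (N/2)| ≤ |f r| + |c₁ * r ^ (N/2)| := abs_sub _ _
        _ = |f r| + |c₁| * |r ^ (N/2)| := by rw [abs_mul]
    calc ‖r ^ n * |f r - c₁ * r ^ (N/2)| * Real.exp (-r / 2)‖
        = r ^ n * |f r - c₁ * r ^ (N/2)| * Real.exp (-r / 2) := by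
          rw [Real.norm_eq_abs, abs_mul, abs_mul, abs_pow, abs_of_nonneg hr0, abs_abs,
            abs_of_nonneg (Real.exp_pos _).le]
      _ ≤ r ^ n * (|f r| + |c₁| * |r ^ (N/2)|) * Real.exp (-r / 2) := by gcongr
      _ = r ^ n * |f r| * Real.exp (-r / 2)
          + |c₁| * (r ^ n * |r ^ (N/2)| * Real.exp (-r / 2)) := by ring

noncomputable def toSchwartzC (u : ℝ → ℂ) (hsm : ContDiff ℝ ∞ u)
    (hsp : HasCompactSupport u) : SchwartzMap ℝ ℂ where
  toFun := u
  smooth' := hsm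
  decay' := by
    intro k n
    have hcont : Continuous fun x : ℝ => ‖x‖ ^ k * ‖iteratedFDeriv ℝ n u x‖ :=
      ((continuous_norm).pow k).mul
        (hsm.continuous_iteratedFDeriv (by exact_mod_cast le_top)).norm
    have hsupp : HasCompactSupport fun x : ℝ => ‖x‖ ^ k * ‖iteratedFDeriv ℝ n u x‖ :=
      ((hsp.iteratedFDeriv n).norm).mul_left
    obtain ⟨C, hC⟩ := hcont.bounded_above_of_compact_support hsupp
    exact ⟨C, fun x => le_trans (le_abs_self _) (hC x)⟩

@[simp] lemma toSchwartzC_apply (u : ℝ → ℂ) (h1) (h2) (x : ℝ) :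
    toSchwartzC u h1 h2 x = u x := rfl

lemma fourier_inj {h : ℝ → ℂ} (hh : Integrable h volume)
    (h0 : ∀ t : ℝ, 𝓕 h t = 0) : ∀ᵐ x : ℝ, h x = 0 := by
  apply ae_eq_zero_of_integral_contDiff_smul_eq_zero hh.locallyIntegrable
  intro g₀ hg₀s hg₀c
  have hcd : ContDiff ℝ ∞ (fun x : ℝ => (g₀ x : ℂ)) := Complex.ofRealCLM.contDiff.comp hg₀s
  have hcs : HasCompactSupport (fun x : ℝ => (g₀ x : ℂ)) :=
    hg₀c.comp_left (g := Complex.ofReal) Complex.ofReal_zero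
  set ψ : SchwartzMap ℝ ℂ := toSchwartzC _ hcd hcs with hψ
  set φ : SchwartzMap ℝ ℂ := (FourierTransform.fourierCLE ℂ 𝓢(ℝ, ℂ)).symm ψ with hφ
  have hflip : (innerₗ ℝ).flip = innerₗ ℝ := by
    apply LinearMap.ext; intro x; apply LinearMap.ext; intro y
    simp only [LinearMap.flip_apply, innerₗ_apply_apply]
    exact real_inner_comm x y
  have key := VectorFourier.integral_fourierIntegral_smul_eq_flip
    (e := Real.fourierChar) (L := innerₗ ℝ) (μ := volume) (ν := volume)
    Real.continuous_fourierChar continuous_inner hh φ.integrable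
  rw [hflip] at key
  have hleft : (∫ ξ : ℝ, (VectorFourier.fourierIntegral Real.fourierChar volume
      (innerₗ ℝ) h ξ) • (φ ξ)) = 0 := by
    have : ∀ ξ : ℝ, VectorFourier.fourierIntegral Real.fourierChar volume (innerₗ ℝ) h ξ = 0 :=
      h0
    simp only [this, zero_smul, integral_zero]
  have hright : (VectorFourier.fourierIntegral Real.fourierChar volume (innerₗ ℝ) ⇑φ) = ⇑ψ := by
    calc (VectorFourier.fourierIntegral Real.fourierChar volume (innerₗ ℝ) ⇑φ)
        = 𝓕 ⇑φ := rfl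
      _ = ⇑(FourierTransform.fourierCLE ℂ 𝓢(ℝ, ℂ) φ) := rfl
      _ = ⇑ψ := by rw [(FourierTransform.fourierCLE ℂ 𝓢(ℝ, ℂ)).apply_symm_apply ψ]
  rw [hright, hleft] at key
  have hsm : ∀ x : ℝ, g₀ x • h x = h x • ψ x := by
    intro x
    rw [hψ]
    simp only [toSchwartzC_apply, smul_eq_mul, Complex.real_smul]
    ring
  simp only [hsm]
  exact key.symm

lemma const_of_deriv_zero {K : ℝ → ℝ}
    (hK : ∀ ξ ∈ Set.Ioo (1/2 : ℝ) 2, HasDerivAt K 0 ξ) :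
    ∀ ξ ∈ Set.Ioo (1/2 : ℝ) 2, K ξ = K 1 := by
  intro ξ hξ
  obtain ⟨ha, hb⟩ := hξ
  rcases le_total ξ 1 with h | h
  · have key := constant_of_has_deriv_right_zero (f := K) (a := ξ) (b := 1)
      (fun x hx => (hK x ⟨lt_of_lt_of_le ha hx.1, lt_of_le_of_lt hx.2 one_lt_two⟩
        ).continuousAt.continuousWithinAt)
      (fun x hx => (hK x ⟨lt_of_lt_of_le ha hx.1, lt_of_lt_of_le hx.2 one_le_two⟩
        ).hasDerivWithinAt)
    exact (key 1 (right_mem_Icc.2 h)).symm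
  · have key := constant_of_has_deriv_right_zero (f := K) (a := 1) (b := ξ)
      (fun x hx => (hK x ⟨lt_of_lt_of_le (by norm_num) hx.1, lt_of_le_of_lt hx.2 hb⟩
        ).continuousAt.continuousWithinAt)
      (fun x hx => (hK x ⟨lt_of_lt_of_le (by norm_num) hx.1, lt_trans hx.2 hb⟩
        ).hasDerivWithinAt)
    exact key ξ (right_mem_Icc.2 h)

/-- The Laplace-transform lemma: if `f` has all polynomial moments against
`e^{-r/2}` finite on `[0,∞)` and satisfies the functional equation
`((N+2)/2) ∫ f e^{-ξr} = ξ ∫ r f e^{-ξr}` for all `ξ ∈ (1/2, 2)`, then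
`f(r) = c₁ r^{N/2}` for a.e. `r ∈ [0,∞)`. -/
theorem laplace_rigidity
    (N : ℝ) (hN : 1 ≤ N)
    (f : ℝ → ℝ) (hf : Measurable f)
    (hint : ∀ n : ℕ,
      IntegrableOn (fun r => r ^ n * |f r| * Real.exp (-r / 2)) (Set.Ici 0))
    (heq : ∀ ξ ∈ Set.Ioo (1/2 : ℝ) 2,
      (N + 2) / 2 * ∫ r in Set.Ici (0:ℝ), f r * Real.exp (-ξ * r)
        = ξ * ∫ r in Set.Ici (0:ℝ), r * f r * Real.exp (-ξ * r)) :
    ∃ c₁ : ℝ, ∀ᵐ r ∂(volume.restrict (Set.Ici (0:ℝ))), f r = c₁ * r ^ (N / 2) := by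
  have hN0 : (0:ℝ) ≤ N := by linarith
  set p : ℝ := N / 2 + 1 with hp
  have hp0 : 0 < p := by rw [hp]; linarith
  set Fr : ℝ → ℝ := fun ξ => ∫ r in Set.Ici (0:ℝ), f r * Real.exp (-(ξ * r)) with hFr
  set Gr : ℝ → ℝ := fun ξ => ∫ r in Set.Ici (0:ℝ), r * f r * Real.exp (-(ξ * r)) with hGr
  have heq' : ∀ ξ ∈ Set.Ioo (1/2 : ℝ) 2, p * Fr ξ = ξ * Gr ξ := by
    intro ξ hξ
    have h := heq ξ hξ
    simp only [neg_mul] at h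
    rw [hFr, hGr]
    rw [show (N + 2)/2 = p by rw [hp]; ring] at h
    exact h
  -- derivative of Fr
  have hFr' : ∀ ξ ∈ Set.Ioo (1/2 : ℝ) 2, HasDerivAt Fr (-(Gr ξ)) ξ := by
    intro ξ hξ
    have hs : (1:ℝ)/2 < ((ξ:ℂ)).re := by simpa using hξ.1
    have hd := lap_hasDerivAt hf (hint 0) (hint 1) hs
    have hD : (∫ r in Set.Ici (0:ℝ), -((r:ℂ) * (f r : ℂ) * Complex.exp (-((ξ:ℂ) * r))))
        = -((Gr ξ : ℝ) : ℂ) := by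
      rw [integral_neg]
      congr 1
      have hfun : (fun r : ℝ => (r:ℂ) * (f r : ℂ) * Complex.exp (-((ξ:ℂ) * r)))
          = fun r : ℝ => ((r * f r : ℝ) : ℂ) * Complex.exp (-((ξ:ℂ) * r)) := by
        funext r; push_cast; ring
      rw [hfun, lap_ofReal (fun r => r * f r) ξ]
    rw [hD] at hd
    have hre := hd.real_of_complex
    have hfun2 : (fun x : ℝ =>
        (∫ r in Set.Ici (0:ℝ), (f r : ℂ) * Complex.exp (-((x:ℂ) * r))).re) = Fr := by
      funext x
      rw [lap_ofReal f x, Complex.ofReal_re]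
    rw [hfun2] at hre
    simpa using hre
  -- the combination K is constant
  have hKd : ∀ ξ ∈ Set.Ioo (1/2 : ℝ) 2, HasDerivAt (fun x : ℝ => Fr x * x ^ p) 0 ξ := by
    intro ξ hξ
    have hξ0 : (0:ℝ) < ξ := lt_trans (by norm_num) hξ.1
    have h2 : HasDerivAt (fun x : ℝ => x ^ p) (p * ξ ^ (p - 1)) ξ :=
      Real.hasDerivAt_rpow_const (Or.inl hξ0.ne')
    have hmul := (hFr' ξ hξ).mul h2
    have hxp : ξ ^ p = ξ ^ (p - 1) * ξ := by
      nth_rewrite 1 [show p = (p - 1) + 1 by ring]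
      rw [Real.rpow_add_one hξ0.ne']
    refine hmul.congr_deriv ?_
    rw [hxp]
    have hh := heq' ξ hξ
    linear_combination (ξ ^ (p - 1)) * hh
  have hconst := const_of_deriv_zero hKd
  set C : ℝ := Fr 1 with hC
  have hGam : 0 < Real.Gamma p := Real.Gamma_pos_of_pos hp0
  refine ⟨C / Real.Gamma p, ?_⟩
  set c₁ : ℝ := C / Real.Gamma p with hc₁
  set g : ℝ → ℝ := fun r => f r - c₁ * r ^ (N/2) with hg
  have hgmeas : Measurable g := by
    rw [hg]
    exact hf.sub
      (((continuous_id.rpow_const (fun x => Or.inr (by positivity))).measurable).const_mul c₁)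
  have hgint : ∀ n : ℕ,
      IntegrableOn (fun r => r ^ n * |g r| * Real.exp (-r / 2)) (Set.Ici 0) :=
    fun n => g_moment hf hN0 c₁ hint n
  -- value of Fr on the interval
  have hFrEq : ∀ ξ ∈ Set.Ioo (1/2 : ℝ) 2, Fr ξ = C * ξ ^ (-p) := by
    intro ξ hξ
    have hξ0 : (0:ℝ) < ξ := lt_trans (by norm_num) hξ.1
    have h := hconst ξ hξ
    rw [Real.one_rpow, mul_one] at h
    have hne : ξ ^ p ≠ 0 := (Real.rpow_pos_of_pos hξ0 p).ne'
    rw [Real.rpow_neg hξ0.le, ← h]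
    field_simp
  -- value of the Laplace transform of r ^ (N/2)
  have hW : ∀ ξ ∈ Set.Ioo (1/2 : ℝ) 2,
      (∫ r in Set.Ici (0:ℝ), r ^ (N/2) * Real.exp (-(ξ * r)))
        = Real.Gamma p * ξ ^ (-p) := by
    intro ξ hξ
    have hξ0 : (0:ℝ) < ξ := lt_trans (by norm_num) hξ.1
    rw [MeasureTheory.integral_Ici_eq_integral_Ioi]
    have hv := integral_rpow_mul_exp_neg_mul_Ioi hp0 hξ0
    rw [show p - 1 = N/2 by rw [hp]; ring] at hv
    rw [hv, one_div, Real.inv_rpow hξ0.le, ← Real.rpow_neg hξ0.le]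
    ring
  -- the complex Laplace transform of g vanishes on the interval
  set Lg : ℂ → ℂ :=
    fun z => ∫ r in Set.Ici (0:ℝ), (g r : ℂ) * Complex.exp (-(z * r)) with hLg
  have hLg0 : ∀ ξ ∈ Set.Ioo (1/2 : ℝ) 2, Lg (ξ : ℂ) = 0 := by
    intro ξ hξ
    have hξh : (1:ℝ)/2 ≤ ξ := hξ.1.le
    rw [hLg]
    simp only
    rw [lap_ofReal g ξ, Complex.ofReal_eq_zero]
    have hif : IntegrableOn (fun r => f r * Real.exp (-(ξ * r))) (Set.Ici 0) := by
      have := lap_integrable_real hf (hint 0) hξh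
      simpa using this
    have hiw : IntegrableOn (fun r : ℝ => r ^ (N/2) * Real.exp (-(ξ * r))) (Set.Ici 0) := by
      have := lap_integrable_real
        ((continuous_id.rpow_const (fun x => Or.inr (by positivity))).measurable)
        (w_moment hN0 0) hξh
      simpa using this
    have hsplit : (fun r : ℝ => g r * Real.exp (-(ξ * r)))
        = fun r : ℝ => f r * Real.exp (-(ξ * r)) - c₁ * (r ^ (N/2) * Real.exp (-(ξ * r))) := by
      funext r; rw [hg]; ring
    rw [hsplit, integral_sub hif (hiw.const_mul c₁), MeasureTheory.integral_const_mul]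
    have h1 : (∫ r in Set.Ici (0:ℝ), f r * Real.exp (-(ξ * r))) = Fr ξ := rfl
    rw [h1, hFrEq ξ hξ, hW ξ hξ, hc₁]
    field_simp
    ring
  -- Lg is analytic on the half plane and vanishes there
  have hUopen : IsOpen {z : ℂ | 1/2 < z.re} := isOpen_lt continuous_const Complex.continuous_re
  have hLgD : ∀ s ∈ {z : ℂ | 1/2 < z.re}, DifferentiableAt ℂ Lg s := by
    intro s hs
    exact (lap_hasDerivAt hgmeas (hgint 0) (hgint 1) hs).differentiableAt
  have hdiff : DifferentiableOn ℂ Lg {z : ℂ | 1/2 < z.re} :=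
    fun s hs => (hLgD s hs).differentiableWithinAt
  have hana : AnalyticOnNhd ℂ Lg {z : ℂ | 1/2 < z.re} := hdiff.analyticOnNhd hUopen
  have hpre : IsPreconnected {z : ℂ | 1/2 < z.re} :=
    (convex_halfSpace_re_gt (1/2)).isPreconnected
  have hmem1 : (1:ℂ) ∈ {z : ℂ | 1/2 < z.re} := by
    simp only [Set.mem_setOf_eq, Complex.one_re]; norm_num
  have hfreq : ∃ᶠ z in nhdsWithin (1:ℂ) {(1:ℂ)}ᶜ, Lg z = 0 := by
    have htend : Tendsto (fun x : ℝ => (x:ℂ)) (nhdsWithin (1:ℝ) {(1:ℝ)}ᶜ)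
        (nhdsWithin (1:ℂ) {(1:ℂ)}ᶜ) := by
      apply Filter.Tendsto.inf
      · simpa using Complex.continuous_ofReal.tendsto 1
      · refine tendsto_principal_principal.2 (fun x hx => ?_)
        simp only [Set.mem_compl_iff, Set.mem_singleton_iff] at hx ⊢
        exact fun hc => hx (by exact_mod_cast hc)
    apply htend.frequently
    apply Filter.Eventually.frequently
    have hmem : Set.Ioo (1/2 : ℝ) 2 ∈ nhds (1:ℝ) := Ioo_mem_nhds (by norm_num) (by norm_num)
    filter_upwards [nhdsWithin_le_nhds hmem] with x hx using hLg0 x hx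
  have hzero : Set.EqOn Lg 0 {z : ℂ | 1/2 < z.re} :=
    hana.eqOn_zero_of_preconnected_of_frequently_eq_zero hpre hmem1 hfreq
  -- Fourier transform of h vanishes
  set h : ℝ → ℂ :=
    Set.indicator (Set.Ici 0) (fun r => (g r : ℂ) * Complex.exp (-(r:ℂ))) with hh
  have hh_int : Integrable h := by
    rw [hh, integrable_indicator_iff measurableSet_Ici]
    have := lap_integrable hgmeas (hgint 0) (s := (1:ℂ)) (by norm_num)
    simpa using this
  have hFh : ∀ t : ℝ, 𝓕 h t = 0 := by
    intro t
    rw [Real.fourier_real_eq_integral_exp_smul]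
    have hrw : (fun v : ℝ => Complex.exp (↑(-2 * π * v * t) * Complex.I) • h v)
        = Set.indicator (Set.Ici 0)
          (fun v : ℝ => (g v : ℂ)
            * Complex.exp (-((1 + ((2 * π * t : ℝ) : ℂ) * Complex.I) * v))) := by
      funext v
      by_cases hv : v ∈ Set.Ici (0:ℝ)
      · rw [hh]
        rw [Set.indicator_of_mem hv, Set.indicator_of_mem hv, smul_eq_mul]
        calc Complex.exp (↑(-2 * π * v * t) * Complex.I) * ((g v : ℂ) * Complex.exp (-(v:ℂ)))
            = (g v : ℂ) * Complex.exp (↑(-2 * π * v * t) * Complex.I + -(v:ℂ)) := by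
              rw [Complex.exp_add]; ring
          _ = (g v : ℂ) * Complex.exp (-((1 + ((2 * π * t : ℝ) : ℂ) * Complex.I) * v)) := by
              congr 2
              push_cast
              ring
      · rw [hh]
        rw [Set.indicator_of_notMem hv, Set.indicator_of_notMem hv, smul_zero]
    rw [hrw, integral_indicator measurableSet_Ici]
    have hmem : (1 + ((2 * π * t : ℝ) : ℂ) * Complex.I) ∈ {z : ℂ | 1/2 < z.re} := by
      simp only [Set.mem_setOf_eq, Complex.add_re, Complex.one_re, Complex.mul_re,
        Complex.ofReal_re, Complex.I_re, Complex.ofReal_im, Complex.I_im]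
      norm_num
    have := hzero hmem
    rw [hLg] at this
    simpa using this
  -- conclude
  have hh0 : ∀ᵐ x : ℝ, h x = 0 := fourier_inj hh_int hFh
  filter_upwards [ae_restrict_of_ae hh0, ae_restrict_mem measurableSet_Ici] with r h0 hr
  rw [hh, Set.indicator_of_mem hr] at h0
  have hz := (mul_eq_zero.1 h0).resolve_right (Complex.exp_ne_zero _)
  rw [Complex.ofReal_eq_zero, hg] at hz
  linarith [hz]
end

section
/- Let g : [0,∞) → ℝ be a measurable function such that ∫₀^∞ r^n |g(r)| e^{−r/2} dr < ∞ for all n ∈ ℕ, and suppose that ∫₀^∞ r^n g(r) e^{−r} dr = 0 for every integer n ≥ 0. Then g(r) = 0 for almost every r ∈ [0,∞). -/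
open MeasureTheory Real SchwartzMap Complex
open scoped FourierTransform ContDiff

/-- A smooth compactly supported real function, viewed as a complex-valued
Schwartz function. -/
noncomputable def mySchwartz (ψ : ℝ → ℝ) (h1 : ContDiff ℝ ∞ ψ)
    (h2 : HasCompactSupport ψ) : SchwartzMap ℝ ℂ where
  toFun x := (ψ x : ℂ)
  smooth' := Complex.ofRealCLM.contDiff.comp h1
  decay' := by
    intro k n
    have hψ : ContDiff ℝ ∞ (fun x => (ψ x : ℂ)) := Complex.ofRealCLM.contDiff.comp h1
    have hsupp : HasCompactSupport (fun x => (ψ x : ℂ)) :=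
      h2.comp_left (g := fun r : ℝ => (r : ℂ)) (by simp)
    have hsupp' : HasCompactSupport
        (fun x => ‖x‖ ^ k * ‖iteratedFDeriv ℝ n (fun x => (ψ x : ℂ)) x‖) := by
      apply HasCompactSupport.mul_left
      exact (hsupp.iteratedFDeriv n).norm
    have hcont : Continuous
        (fun x => ‖x‖ ^ k * ‖iteratedFDeriv ℝ n (fun x => (ψ x : ℂ)) x‖) := by
      apply Continuous.mul (by fun_prop)
      exact (hψ.continuous_iteratedFDeriv (mod_cast le_top)).norm
    obtain ⟨C, hC⟩ := hsupp'.exists_bound_of_continuous hcont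
    exact ⟨C, fun x => (le_abs_self _).trans (hC x)⟩

theorem vanishing_moments_aux
    (g : ℝ → ℝ) (hg : Measurable g)
    (hint : ∀ n : ℕ,
      IntegrableOn (fun r => r ^ n * |g r| * Real.exp (-r / 2)) (Set.Ici 0))
    (hmom : ∀ n : ℕ,
      ∫ r in Set.Ici (0:ℝ), r ^ n * g r * Real.exp (-r) = 0) :
    ∀ᵐ r ∂(volume.restrict (Set.Ici (0:ℝ))), g r = 0 := by
  -- the analytic function `F z = ∫ g x e^{x (z-1)} dx` on the strip `Re z < 1/2`
  set S : Set ℂ := {z : ℂ | z.re < 1/2} with hS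
  set F : ℂ → ℂ := fun z => ∫ x in Set.Ici (0:ℝ),
    (g x : ℂ) * Complex.exp ((x : ℂ) * (z - 1)) with hF
  -- boilerplate measurability
  have meas : ∀ (n : ℕ) (z : ℂ), Measurable fun x : ℝ =>
      (x : ℂ) ^ n * (g x : ℂ) * Complex.exp ((x : ℂ) * (z - 1)) := by
    intro n z
    fun_prop
  -- the key integrability estimate
  have key : ∀ (n : ℕ) (z : ℂ), z.re ≤ 1/2 →
      IntegrableOn (fun x : ℝ =>
        (x : ℂ) ^ n * (g x : ℂ) * Complex.exp ((x : ℂ) * (z - 1))) (Set.Ici 0) := by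
    intro n z hz
    apply Integrable.mono (hint n) ((meas n z).aestronglyMeasurable)
    filter_upwards [ae_restrict_mem measurableSet_Ici] with x hx
    have hx0 : (0:ℝ) ≤ x := hx
    have h1 : ‖(x : ℂ) ^ n * (g x : ℂ) * Complex.exp ((x : ℂ) * (z - 1))‖
        = x ^ n * |g x| * Real.exp (x * (z.re - 1)) := by
      rw [norm_mul, norm_mul, norm_pow, Complex.norm_exp]
      simp [Complex.norm_real, Real.norm_eq_abs, _root_.abs_of_nonneg hx0, Complex.re_ofReal_mul,
        Complex.sub_re, Complex.one_re]
    rw [h1, Real.norm_eq_abs]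
    have h2 : x * (z.re - 1) ≤ -x / 2 := by nlinarith
    calc x ^ n * |g x| * Real.exp (x * (z.re - 1))
        ≤ x ^ n * |g x| * Real.exp (-x / 2) :=
          mul_le_mul_of_nonneg_left (Real.exp_le_exp.2 h2) (by positivity)
      _ ≤ |x ^ n * |g x| * Real.exp (-x / 2)| := le_abs_self _
  -- `F` is differentiable on the strip `S`
  have hSopen : IsOpen S := isOpen_lt Complex.continuous_re continuous_const
  have hder : ∀ z ∈ S, HasDerivAt F
      (∫ x in Set.Ici (0:ℝ), (g x : ℂ) * (Complex.exp ((x : ℂ) * (z - 1)) * (x : ℂ))) z := by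
    intro z hz
    have hz' : z.re < 1/2 := hz
    have hεpos : 0 < (1/2 - z.re)/2 := by linarith
    have := hasDerivAt_integral_of_dominated_loc_of_deriv_le
      (μ := volume.restrict (Set.Ici 0))
      (F := fun w (x : ℝ) => (g x : ℂ) * Complex.exp ((x : ℂ) * (w - 1)))
      (F' := fun w (x : ℝ) => (g x : ℂ) * (Complex.exp ((x : ℂ) * (w - 1)) * (x : ℂ)))
      (x₀ := z) (bound := fun x => x ^ 1 * |g x| * Real.exp (-x / 2))
      (Metric.ball_mem_nhds z hεpos)
      (Filter.Eventually.of_forall fun w =>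
        ((by fun_prop : Measurable fun x : ℝ => (g x : ℂ) * Complex.exp ((x : ℂ) * (w - 1)))).aestronglyMeasurable)
      (by simpa [IntegrableOn] using key 0 z hz'.le)
      ((by fun_prop : Measurable fun x : ℝ =>
        (g x : ℂ) * (Complex.exp ((x : ℂ) * (z - 1)) * (x : ℂ))).aestronglyMeasurable)
      ?_ (hint 1) ?_
    · exact this.2
    · filter_upwards [ae_restrict_mem measurableSet_Ici] with x hx
      intro w hw
      have hx0 : (0:ℝ) ≤ x := hx
      have hwre : w.re < 1/2 := by
        have h1 : |(w - z).re| ≤ ‖w - z‖ := Complex.abs_re_le_norm _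
        have h2 : ‖w - z‖ < (1/2 - z.re)/2 := by
          simpa [Complex.dist_eq] using (Metric.mem_ball.1 hw)
        have := abs_le.1 h1
        simp only [Complex.sub_re] at this
        linarith [this.2, h2, h1]
      have e1 : ‖(g x : ℂ) * (Complex.exp ((x : ℂ) * (w - 1)) * (x : ℂ))‖
          = |g x| * (Real.exp (x * (w.re - 1)) * x) := by
        rw [norm_mul, norm_mul, Complex.norm_exp]
        simp [Complex.norm_real, Real.norm_eq_abs, _root_.abs_of_nonneg hx0,
          Complex.re_ofReal_mul, Complex.sub_re, Complex.one_re]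
      rw [e1, pow_one]
      have e2 : |g x| * (Real.exp (x * (w.re - 1)) * x)
          = x * |g x| * Real.exp (x * (w.re - 1)) := by ring
      rw [e2]
      gcongr
      nlinarith
    · filter_upwards [ae_restrict_mem measurableSet_Ici] with x _
      intro w _
      have h1 : HasDerivAt (fun w : ℂ => (x : ℂ) * (w - 1)) ((x : ℂ)) w := by
        simpa using ((hasDerivAt_id w).sub_const 1).const_mul ((x : ℂ))
      have h2 := h1.cexp
      simpa using h2.const_mul ((g x : ℂ))
  have hFanalytic : AnalyticOnNhd ℂ F S :=
    DifferentiableOn.analyticOnNhd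
      (fun z hz => ((hder z hz).differentiableAt).differentiableWithinAt) hSopen
  -- `F` vanishes on the ball of radius 1/2 around the origin, by expanding in series
  have hball : ∀ z : ℂ, ‖z‖ < 1/2 → F z = 0 := by
    intro z hzn
    set T : ℕ → ℝ → ℂ := fun n x =>
      (z ^ n / (n.factorial : ℂ)) * ((x : ℂ) ^ n * (g x : ℂ) * Complex.exp ((x : ℂ) * (0 - 1)))
      with hT
    have Tint : ∀ n, Integrable (T n) (volume.restrict (Set.Ici 0)) := fun n =>
      (key n 0 (by norm_num)).const_mul _
    have Tnorm : ∀ n (x : ℝ), 0 ≤ x → ‖T n x‖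
        = (‖z‖ ^ n / n.factorial) * (x ^ n * |g x| * Real.exp (-x)) := by
      intro n x hx0
      rw [hT]
      have he : ‖Complex.exp ((x:ℂ) * (0 - 1))‖ = Real.exp (-x) := by
        rw [Complex.norm_exp]
        simp [Complex.re_ofReal_mul, Complex.sub_re, Complex.one_re]
      simp only [norm_mul, norm_div, norm_pow, he, Complex.norm_natCast,
        Complex.norm_real, Real.norm_eq_abs]
      rw [_root_.abs_of_nonneg hx0]
    have hsummable : Summable fun n => ∫ x in Set.Ici (0:ℝ), ‖T n x‖ := by
      apply summable_of_sum_range_le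
        (c := ∫ x in Set.Ici (0:ℝ), x ^ 0 * |g x| * Real.exp (-x / 2))
        (fun n => integral_nonneg fun x => norm_nonneg _)
      intro N
      rw [← integral_finset_sum _ (fun n _ => (Tint n).norm)]
      apply integral_mono_ae (integrable_finset_sum _ (fun n _ => (Tint n).norm)) (hint 0)
      filter_upwards [ae_restrict_mem measurableSet_Ici] with x hx
      have hx0 : (0:ℝ) ≤ x := hx
      have e3 : ∀ n ∈ Finset.range N, ‖T n x‖
          = ((‖z‖ * x) ^ n / n.factorial) * (|g x| * Real.exp (-x)) := by
        intro n _
        rw [Tnorm n x hx0, mul_pow]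
        ring
      rw [Finset.sum_congr rfl e3, ← Finset.sum_mul]
      have e4 : ∑ n ∈ Finset.range N, (‖z‖ * x) ^ n / (n.factorial : ℝ)
          ≤ Real.exp (‖z‖ * x) := by
        simpa using Real.sum_le_exp_of_nonneg (by positivity : (0:ℝ) ≤ ‖z‖ * x) N
      calc (∑ n ∈ Finset.range N, (‖z‖ * x) ^ n / (n.factorial : ℝ)) * (|g x| * Real.exp (-x))
          ≤ Real.exp (‖z‖ * x) * (|g x| * Real.exp (-x)) := by
            apply mul_le_mul_of_nonneg_right e4 (by positivity)
        _ = |g x| * Real.exp (‖z‖ * x + -x) := by rw [Real.exp_add]; ring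
        _ ≤ |g x| * Real.exp (-x / 2) :=
            mul_le_mul_of_nonneg_left (Real.exp_le_exp.2 (by nlinarith [norm_nonneg z]))
              (abs_nonneg _)
        _ = x ^ 0 * |g x| * Real.exp (-x / 2) := by rw [pow_zero, one_mul]
    have hs := hasSum_integral_of_summable_integral_norm Tint hsummable
    have hzero_terms : ∀ n, (∫ x in Set.Ici (0:ℝ), T n x) = 0 := by
      intro n
      have heqn : (fun x : ℝ => (x : ℂ) ^ n * (g x : ℂ) * Complex.exp ((x : ℂ) * (0 - 1)))
          = fun x : ℝ => ((x ^ n * g x * Real.exp (-x) : ℝ) : ℂ) := by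
        funext x
        rw [show ((x:ℂ) * (0 - 1)) = ((-x : ℝ) : ℂ) by push_cast; ring, ← Complex.ofReal_exp]
        push_cast
        ring
      rw [hT]
      simp only
      rw [integral_const_mul, heqn]
      have hofreal : ∫ x in Set.Ici (0:ℝ), ((x ^ n * g x * Real.exp (-x) : ℝ) : ℂ)
          = ((∫ x in Set.Ici (0:ℝ), x ^ n * g x * Real.exp (-x) : ℝ) : ℂ) :=
        integral_ofReal
      rw [hofreal, hmom n]
      simp
    -- interchange sum and integral
    have hcong : F z = ∫ x in Set.Ici (0:ℝ), ∑' n, T n x := by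
      rw [hF]
      simp only
      congr 1
      funext x
      have hterm : ∀ n, T n x
          = (((x:ℂ) * z) ^ n / (n.factorial : ℂ))
            * ((g x : ℂ) * Complex.exp ((x : ℂ) * (0 - 1))) := by
        intro n
        rw [hT, mul_pow]
        ring
      rw [tsum_congr hterm, tsum_mul_right]
      have hexp : (∑' n : ℕ, ((x:ℂ) * z) ^ n / (n.factorial : ℂ))
          = Complex.exp ((x:ℂ) * z) := by
        rw [Complex.exp_eq_exp_ℂ, NormedSpace.exp_eq_tsum_div]
      rw [hexp, show (x:ℂ) * (z - 1) = (x:ℂ) * z + (x:ℂ) * (0 - 1) by ring,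
        Complex.exp_add]
      ring
    rw [hcong]
    have h0 : (fun n => ∫ x in Set.Ici (0:ℝ), T n x) = fun _ => (0:ℂ) :=
      funext hzero_terms
    rw [h0] at hs
    exact hs.unique hasSum_zero
  -- identity theorem: `F` vanishes on the whole strip
  have h0S : (0:ℂ) ∈ S := by
    simp only [hS, Set.mem_setOf_eq, Complex.zero_re]
    norm_num
  have hzero : Set.EqOn F 0 S := by
    apply hFanalytic.eqOn_zero_of_preconnected_of_eventuallyEq_zero
      (convex_halfSpace_re_lt (1/2 : ℝ)).isPreconnected h0S
    apply Filter.eventuallyEq_of_mem (Metric.ball_mem_nhds (0:ℂ) (by norm_num : (0:ℝ) < 1/2))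
    intro z hz
    exact hball z (by simpa [Metric.mem_ball, Complex.dist_eq] using hz)
  -- the Fourier transform of `f` vanishes
  set f : ℝ → ℂ := Set.indicator (Set.Ici (0:ℝ))
    (fun x => (g x : ℂ) * Complex.exp ((x : ℂ) * (0 - 1))) with hfdef
  have hfint : Integrable f := by
    rw [hfdef, integrable_indicator_iff measurableSet_Ici]
    simpa using key 0 0 (by norm_num)
  have hFour : ∀ w : ℝ, 𝓕 f w = 0 := by
    intro w
    rw [Real.fourier_real_eq_integral_exp_smul]
    have hptwise : ∀ v : ℝ, Complex.exp (↑(-2 * π * v * w) * Complex.I) • f v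
        = Set.indicator (Set.Ici (0:ℝ))
          (fun v => (g v : ℂ)
            * Complex.exp ((v : ℂ) * ((↑(-2 * π * w) * Complex.I) - 1))) v := by
      intro v
      rw [hfdef]
      by_cases hv : v ∈ Set.Ici (0:ℝ)
      · rw [Set.indicator_of_mem hv, Set.indicator_of_mem hv, smul_eq_mul,
          show ((v:ℂ) * ((↑(-2 * π * w) * Complex.I) - 1))
            = (↑(-2 * π * v * w) * Complex.I) + (v:ℂ) * (0 - 1) by push_cast; ring,
          Complex.exp_add]
        ring
      · rw [Set.indicator_of_notMem hv, Set.indicator_of_notMem hv, smul_zero]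
    rw [integral_congr_ae (Filter.Eventually.of_forall hptwise),
      integral_indicator measurableSet_Ici]
    have hmem : (↑(-2 * π * w) * Complex.I) ∈ S := by
      simp [hS, Set.mem_setOf_eq]
    have := hzero hmem
    rw [hF] at this
    simpa using this
  -- duality with Schwartz functions
  have hdual : ∀ φ : SchwartzMap ℝ ℂ, ∫ x, f x * φ x = 0 := by
    intro φ
    set ψ' : SchwartzMap ℝ ℂ := (FourierTransform.fourierCLE ℂ (SchwartzMap ℝ ℂ)).symm φ with hψ'
    have hflip : (innerₗ ℝ).flip = innerₗ ℝ := by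
      apply LinearMap.ext; intro x; apply LinearMap.ext; intro y
      simp [real_inner_comm]
    have hfliplem := VectorFourier.integral_fourierIntegral_smul_eq_flip
      (μ := (volume : Measure ℝ)) (ν := (volume : Measure ℝ)) (L := innerₗ ℝ)
      Real.continuous_fourierChar (by exact continuous_inner) hfint ψ'.integrable
    rw [hflip] at hfliplem
    have hL : ∀ ξ : ℝ, VectorFourier.fourierIntegral Real.fourierChar volume (innerₗ ℝ) f ξ
        = 0 := hFour
    have h𝓕ψ' : VectorFourier.fourierIntegral Real.fourierChar volume (innerₗ ℝ) ⇑ψ' = ⇑φ := by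
      have e1 : VectorFourier.fourierIntegral Real.fourierChar volume (innerₗ ℝ) ⇑ψ'
          = 𝓕 ⇑ψ' := rfl
      rw [e1, ← SchwartzMap.fourier_coe, ← FourierTransform.fourierCLE_apply (R := ℂ) (E := SchwartzMap ℝ ℂ) ψ', hψ',
        ContinuousLinearEquiv.apply_symm_apply]
    rw [h𝓕ψ'] at hfliplem
    have : (∫ ξ, VectorFourier.fourierIntegral Real.fourierChar volume (innerₗ ℝ) f ξ • ψ' ξ)
        = 0 := by
      simp only [hL, zero_smul, integral_zero]
    rw [this] at hfliplem
    simp only [smul_eq_mul] at hfliplem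
    exact hfliplem.symm
  -- conclude by testing against smooth compactly supported functions
  have htest : ∀ ψ : ℝ → ℝ, ContDiff ℝ ∞ ψ → HasCompactSupport ψ →
      ∫ x, ψ x • f x = 0 := by
    intro ψ h1 h2
    have := hdual (mySchwartz ψ h1 h2)
    have e : ∀ x : ℝ, ψ x • f x = f x * (mySchwartz ψ h1 h2) x := by
      intro x
      have : (mySchwartz ψ h1 h2) x = (ψ x : ℂ) := rfl
      rw [this, Complex.real_smul, mul_comm]
    rw [integral_congr_ae (Filter.Eventually.of_forall e)]
    exact this
  have hae : ∀ᵐ x ∂(volume : Measure ℝ), f x = 0 :=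
    ae_eq_zero_of_integral_contDiff_smul_eq_zero hfint.locallyIntegrable htest
  have hae' : ∀ᵐ x ∂(volume.restrict (Set.Ici (0:ℝ))), f x = 0 := ae_restrict_of_ae hae
  filter_upwards [hae', ae_restrict_mem measurableSet_Ici] with x h1 h2
  rw [hfdef, Set.indicator_of_mem h2] at h1
  rcases mul_eq_zero.1 h1 with h | h
  · exact_mod_cast h
  · exact absurd h (Complex.exp_ne_zero _)

/-- Completeness of polynomials in `L²(e^{-r} dr)`: a measurable function on
`[0,∞)` with all polynomial moments against `e^{-r/2}` finite, and with all
moments against the weight `e^{-r}` vanishing, is zero almost everywhere. -/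
theorem vanishing_moments
    (g : ℝ → ℝ) (hg : Measurable g)
    (hint : ∀ n : ℕ,
      IntegrableOn (fun r => r ^ n * |g r| * Real.exp (-r / 2)) (Set.Ici 0))
    (hmom : ∀ n : ℕ,
      ∫ r in Set.Ici (0:ℝ), r ^ n * g r * Real.exp (-r) = 0) :
    ∀ᵐ r ∂(volume.restrict (Set.Ici (0:ℝ))), g r = 0 :=
  vanishing_moments_aux g hg hint hmom
end

section
/- Let (X,d) be a metric space, m a Borel measure on X, x₀ ∈ X a fixed point, and B_r(x₀) the open ball of radius r about x₀. Suppose there exist constants C > 0 and N ≥ 1 such that m(B_r(x₀)) ≤ C · max(1, r^N) for all r > 0. Then for every p > 0 and every t > 0, both sides of the following identity are finite and it holds: ∫_X d(x₀,x)^{2p} exp(−d(x₀,x)²/(4t)) dm(x) = ∫₀^∞ m(B_r(x₀)) · ( r^{2p+1}/(2t) − 2p r^{2p−1} ) · exp(−r²/(4t)) dr. -/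
open MeasureTheory Real Set Filter

private lemma aux_int (t a : ℝ) (ht : 0 < t) (ha : -1 < a) :
    MeasureTheory.IntegrableOn (fun r : ℝ => r ^ a * Real.exp (-(r ^ 2) / (4 * t)))
      (Set.Ioi (0:ℝ)) := by
  have hb : (0:ℝ) < 1/(4*t) := by positivity
  have h := integrableOn_rpow_mul_exp_neg_mul_sq hb ha
  refine h.congr_fun (fun r _ => ?_) measurableSet_Ioi
  have : -(1/(4*t)) * r^2 = -(r^2)/(4*t) := by ring
  simp only [this]

/-- Gaussian moment identity via the volume function: under polynomial volume
growth `m(B_r(x₀)) ≤ C·max(1, r^N)`, for all `p > 0` and `t > 0` both sides of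
`∫ d^{2p} e^{-d²/(4t)} dm = ∫₀^∞ m(B_r) (r^{2p+1}/(2t) - 2p r^{2p-1}) e^{-r²/(4t)} dr`
are finite and the identity holds. -/
theorem gaussian_moment_identity
    {X : Type*} [MetricSpace X] [MeasurableSpace X] [BorelSpace X]
    (m : Measure X) (x₀ : X) (C N : ℝ) (hC : 0 < C) (hN : 1 ≤ N)
    (hgrowth : ∀ r : ℝ, 0 < r →
      m (Metric.ball x₀ r) ≤ ENNReal.ofReal (C * max 1 (r ^ N))) :
    ∀ p t : ℝ, 0 < p → 0 < t →
      Integrable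
        (fun x => dist x₀ x ^ (2 * p) * Real.exp (-(dist x₀ x ^ 2) / (4 * t))) m ∧
      IntegrableOn
        (fun r => (m (Metric.ball x₀ r)).toReal *
          (r ^ (2 * p + 1) / (2 * t) - 2 * p * r ^ (2 * p - 1)) *
          Real.exp (-(r ^ 2) / (4 * t))) (Set.Ioi (0:ℝ)) ∧
      ∫ x, dist x₀ x ^ (2 * p) * Real.exp (-(dist x₀ x ^ 2) / (4 * t)) ∂m
        = ∫ r in Set.Ioi (0:ℝ),
            (m (Metric.ball x₀ r)).toReal *
              (r ^ (2 * p + 1) / (2 * t) - 2 * p * r ^ (2 * p - 1)) *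
              Real.exp (-(r ^ 2) / (4 * t)) := by
  intro p t hp ht
  -- finiteness of balls
  have hfin : ∀ r : ℝ, 0 < r → m (Metric.ball x₀ r) < ⊤ := fun r hr =>
    lt_of_le_of_lt (hgrowth r hr) ENNReal.ofReal_lt_top
  -- m is sigma-finite
  haveI : SigmaFinite m := by
    refine ⟨⟨⟨fun n => Metric.ball x₀ (n + 1), fun _ => trivial,
      fun n => hfin _ (by positivity), ?_⟩⟩⟩
    refine Set.eq_univ_iff_forall.2 fun x => Set.mem_iUnion.2 ⟨⌈dist x x₀⌉₊, ?_⟩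
    exact Metric.mem_ball.2 (lt_of_le_of_lt (Nat.le_ceil _) (by exact_mod_cast lt_add_one _))
  set F : ℝ → ℝ := fun r =>
    (r ^ (2 * p + 1) / (2 * t) - 2 * p * r ^ (2 * p - 1)) * Real.exp (-(r ^ 2) / (4 * t))
    with hF_def
  set g : ℝ → ℝ := fun r => r ^ (2 * p) * Real.exp (-(r ^ 2) / (4 * t)) with hg_def
  have hFmeas : Measurable F := by
    apply Measurable.mul
    · exact ((measurable_id.pow measurable_const).div_const _).sub
        ((measurable_id.pow measurable_const).const_mul _)
    · exact (Real.continuous_exp.comp (by continuity)).measurable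
  -- integrability of F on Ioi s for s ≥ 0
  have hFint : ∀ s : ℝ, 0 ≤ s → IntegrableOn F (Set.Ioi s) := by
    intro s hs
    have h1 : IntegrableOn F (Set.Ioi (0:ℝ)) := by
      have heq : F = fun r =>
          (1 / (2 * t)) * (r ^ (2 * p + 1) * Real.exp (-(r ^ 2) / (4 * t)))
          - (2 * p) * (r ^ (2 * p - 1) * Real.exp (-(r ^ 2) / (4 * t))) := by
        funext r; rw [hF_def]; ring
      rw [heq]
      exact ((aux_int t _ ht (by linarith)).const_mul _).sub
        ((aux_int t _ ht (by linarith)).const_mul _)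
    exact h1.mono_set (Set.Ioi_subset_Ioi hs)
  -- g tends to 0 at infinity
  have hgtend : Tendsto g atTop (nhds 0) := by
    have hb : (0:ℝ) < 1/(4*t) := by positivity
    have hexp : Tendsto (fun x : ℝ => Real.exp (-(1/2) * x)) atTop (nhds 0) :=
      Real.tendsto_exp_atBot.comp (tendsto_id.const_mul_atTop_of_neg (by norm_num))
    have h := (rpow_mul_exp_neg_mul_sq_isLittleO_exp_neg hb (2 * p)).tendsto_zero_of_tendsto hexp
    refine h.congr fun r => ?_
    rw [hg_def]
    congr 2
    ring
  -- FTC : ∫_{Ioi s} F = g s for s ≥ 0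
  have hFTC : ∀ s : ℝ, 0 ≤ s → ∫ r in Set.Ioi s, F r = g s := by
    intro s hs
    have key := integral_Ioi_of_hasDerivAt_of_tendsto
      (f := fun r => -(g r)) (f' := F) (a := s) (m := 0) ?_ ?_ (hFint s hs) ?_
    · rw [key]; ring
    · refine (ContinuousAt.neg ?_).continuousWithinAt
      exact (Real.continuousAt_rpow_const s (2*p) (Or.inr (by positivity))).mul
        (Real.continuous_exp.comp (by continuity)).continuousAt
    · intro r hr
      have hr0 : (0:ℝ) < r := lt_of_le_of_lt hs hr
      have h1 : HasDerivAt (fun r : ℝ => r ^ (2 * p))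
          ((2 * p) * r ^ (2 * p - 1)) r :=
        Real.hasDerivAt_rpow_const (Or.inl hr0.ne')
      have hin : HasDerivAt (fun r : ℝ => -(r ^ 2) / (4 * t))
          (-((2:ℕ) * r ^ 1) / (4 * t)) r := ((hasDerivAt_pow 2 r).neg).div_const _
      have h2 := hin.exp
      have h3 := (h1.mul h2).neg
      convert h3 using 1
      · funext x; simp only [hg_def, Pi.neg_apply, Pi.mul_apply]
      rw [hF_def]
      simp only
      rw [Real.rpow_add_one hr0.ne' (2 * p)]
      push_cast
      ring
    · simpa using hgtend.neg
  -- the distance function and the sliced integrand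
  set D : X → ℝ := fun x => dist x₀ x with hD_def
  set φ : ℝ → X → ℝ := fun r x => Set.indicator (Set.Ioi (D x)) F r with hφ_def
  set μ : Measure ℝ := volume.restrict (Set.Ioi (0:ℝ)) with hμ_def
  have hslice_ball : ∀ (r : ℝ) (x : X),
      φ r x = Set.indicator (Metric.ball x₀ r) (fun _ => F r) x := by
    intro r x
    simp only [hφ_def]
    by_cases h : dist x₀ x < r
    · rw [Set.indicator_of_mem (Set.mem_Ioi.mpr h),
        Set.indicator_of_mem (Metric.mem_ball.mpr (by rwa [dist_comm]))]
    · rw [Set.indicator_of_notMem (by simpa using h),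
        Set.indicator_of_notMem
          (fun hx => h (by rw [dist_comm x₀ x]; exact Metric.mem_ball.mp hx))]
  have hφmeas : AEStronglyMeasurable (Function.uncurry φ) (μ.prod m) := by
    have hS : MeasurableSet {q : ℝ × X | D q.2 < q.1} :=
      measurableSet_lt
        (((continuous_const.dist continuous_id).measurable).comp measurable_snd) measurable_fst
    have huncurry : Function.uncurry φ
        = Set.indicator {q : ℝ × X | D q.2 < q.1} (fun q => F q.1) := by
      funext q
      simp only [Function.uncurry, hφ_def, Set.indicator_apply, Set.mem_Ioi, Set.mem_setOf_eq]
    rw [huncurry]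
    exact (((hFmeas.comp measurable_fst).indicator hS).stronglyMeasurable).aestronglyMeasurable
  -- the dominating function
  have h2p1 : (-1:ℝ) < 2 * p + 1 := by linarith
  have h2pm1 : (-1:ℝ) < 2 * p - 1 := by linarith
  set H : ℝ → ℝ := fun r =>
    C * ((r ^ (2*p+1) / (2*t) + 2*p * r ^ (2*p-1))
      + (r ^ (N+(2*p+1)) / (2*t) + 2*p * r ^ (N+(2*p-1))))
      * Real.exp (-(r ^ 2) / (4 * t)) with hH_def
  have hHint : IntegrableOn H (Set.Ioi (0:ℝ)) := by
    have h := ((((aux_int t _ ht h2p1).const_mul (1/(2*t))).add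
        ((aux_int t _ ht h2pm1).const_mul (2*p))).add
      (((aux_int t _ ht (by linarith : (-1:ℝ) < N+(2*p+1))).const_mul (1/(2*t))).add
       ((aux_int t _ ht (by linarith : (-1:ℝ) < N+(2*p-1))).const_mul (2*p)))).const_mul C
    exact IntegrableOn.congr_fun h
      (fun r _ => by simp only [hH_def, Pi.add_apply]; ring) measurableSet_Ioi
  -- integrability on the product space
  have hφint : Integrable (Function.uncurry φ) (μ.prod m) := by
    rw [integrable_prod_iff hφmeas]
    constructor
    · filter_upwards [self_mem_ae_restrict measurableSet_Ioi] with r hr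
      have : (fun x => Function.uncurry φ (r, x))
          = Set.indicator (Metric.ball x₀ r) (fun _ => F r) := by
        funext x; exact hslice_ball r x
      rw [this]
      exact (integrable_indicator_iff measurableSet_ball).2
        (integrableOn_const (hfin r hr).ne)
    · refine Integrable.mono' hHint (hφmeas.norm.integral_prod_right') ?_
      filter_upwards [self_mem_ae_restrict measurableSet_Ioi] with r hr
      have hnorm : (fun x => ‖Function.uncurry φ (r, x)‖)
          = Set.indicator (Metric.ball x₀ r) (fun _ => ‖F r‖) := by
        funext x
        rw [Function.uncurry_apply_pair, hslice_ball r x, norm_indicator_eq_indicator_norm]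
      rw [hnorm, integral_indicator_const _ measurableSet_ball, smul_eq_mul, measureReal_def,
        Real.norm_of_nonneg (mul_nonneg ENNReal.toReal_nonneg (norm_nonneg _))]
      have hvol : (m (Metric.ball x₀ r)).toReal ≤ C * max 1 (r ^ N) :=
        ENNReal.toReal_le_of_le_ofReal
          (mul_nonneg hC.le (le_trans zero_le_one (le_max_left _ _))) (hgrowth r hr)
      have hr0 : (0:ℝ) < r := hr
      have hx : (0:ℝ) ≤ r ^ (2*p+1) / (2*t) :=
        div_nonneg (Real.rpow_nonneg hr0.le _) (by linarith)
      have hy : (0:ℝ) ≤ 2*p * r ^ (2*p-1) :=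
        mul_nonneg (by linarith) (Real.rpow_nonneg hr0.le _)
      have hFb : ‖F r‖ ≤ (r ^ (2*p+1) / (2*t) + 2*p * r ^ (2*p-1))
          * Real.exp (-(r ^ 2) / (4 * t)) := by
        rw [hF_def]
        simp only [Real.norm_eq_abs, abs_mul, abs_of_pos (Real.exp_pos _)]
        refine mul_le_mul_of_nonneg_right ?_ (Real.exp_pos _).le
        rw [abs_le]
        constructor <;> linarith
      calc (m (Metric.ball x₀ r)).toReal * ‖F r‖
          ≤ (C * max 1 (r ^ N)) * ((r ^ (2*p+1) / (2*t) + 2*p * r ^ (2*p-1))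
              * Real.exp (-(r ^ 2) / (4 * t))) := by
            refine mul_le_mul hvol hFb (norm_nonneg _) ?_
            exact mul_nonneg hC.le (le_trans zero_le_one (le_max_left _ _))
        _ ≤ (C * (1 + r ^ N)) * ((r ^ (2*p+1) / (2*t) + 2*p * r ^ (2*p-1))
              * Real.exp (-(r ^ 2) / (4 * t))) := by
            refine mul_le_mul_of_nonneg_right (mul_le_mul_of_nonneg_left ?_ hC.le) ?_
            · exact max_le (le_add_of_nonneg_right (Real.rpow_nonneg hr.le N))
                (le_add_of_nonneg_left zero_le_one)
            · exact mul_nonneg (add_nonneg hx hy) (Real.exp_pos _).le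
        _ = H r := by
            rw [hH_def]
            simp only
            rw [Real.rpow_add hr N (2*p+1), Real.rpow_add hr N (2*p-1)]
            ring
  -- slicing in r : the inner improper integral equals g ∘ D
  have key_slice_r : ∀ x : X, ∫ r, φ r x ∂μ = g (D x) := by
    intro x
    have h0 : ∫ r, φ r x ∂μ = ∫ r in Set.Ioi (D x), F r := by
      rw [hμ_def, hφ_def]
      simp only
      rw [integral_indicator measurableSet_Ioi, Measure.restrict_restrict measurableSet_Ioi,
        Set.Ioi_inter_Ioi, sup_eq_left.mpr (dist_nonneg : (0:ℝ) ≤ D x)]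
    rw [h0]
    exact hFTC (D x) dist_nonneg
  -- slicing in x
  have key_slice_x : ∀ r : ℝ, ∫ x, φ r x ∂m = (m (Metric.ball x₀ r)).toReal * F r := by
    intro r
    rw [show φ r = Set.indicator (Metric.ball x₀ r) (fun _ => F r) from
      funext (hslice_ball r)]
    rw [integral_indicator_const _ measurableSet_ball, smul_eq_mul, measureReal_def]
  have comp1 : Integrable (fun x => g (D x)) m :=
    hφint.integral_prod_right.congr (Filter.Eventually.of_forall fun x => key_slice_r x)
  have comp2 : IntegrableOn (fun r => (m (Metric.ball x₀ r)).toReal * F r) (Set.Ioi (0:ℝ)) :=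
    hφint.integral_prod_left.congr (Filter.Eventually.of_forall fun r => key_slice_x r)
  have comp3 : ∫ x, g (D x) ∂m = ∫ r, (m (Metric.ball x₀ r)).toReal * F r ∂μ := by
    calc ∫ x, g (D x) ∂m = ∫ x, ∫ r, φ r x ∂μ ∂m :=
          integral_congr_ae (Filter.Eventually.of_forall fun x => (key_slice_r x).symm)
      _ = ∫ r, ∫ x, φ r x ∂m ∂μ := (integral_integral_swap hφint).symm
      _ = ∫ r, (m (Metric.ball x₀ r)).toReal * F r ∂μ :=
          integral_congr_ae (Filter.Eventually.of_forall fun r => key_slice_x r)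
  refine ⟨comp1, ?_, ?_⟩
  · refine comp2.congr_fun (fun r _ => ?_) measurableSet_Ioi
    rw [hF_def]; ring
  · refine comp3.trans ?_
    refine integral_congr_ae (Filter.Eventually.of_forall fun r => ?_)
    rw [hF_def]; ring
end

section
/- Let (X,d) be a metric space, m a Borel measure on X, x₀ ∈ X a fixed point, and let N > 0 and c* > 0. Suppose that for every t > 0 the integral Z(t) := ∫_X exp(−d(x₀,x)²/(4t)) dm(x) is finite and equals c* t^{N/2}. Define the probability density ρ̂_t(x) := exp(−d(x₀,x)²/(4t)) / (c* t^{N/2}). Then for every t > 0 the function ρ̂_t log ρ̂_t is m-integrable and ∫_X ρ̂_t log ρ̂_t dm = −N/2 − log c* − (N/2) log t. -/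
open MeasureTheory Real

/-- Key: for each `s > 0`, `x ↦ exp(-d(x₀,x)² s)` is integrable with integral
`c* (4s)^{-N/2}`. -/
lemma gaussian_key
    {X : Type*} [MetricSpace X] [MeasurableSpace X] [BorelSpace X]
    (m : Measure X) (x₀ : X) (N cstar : ℝ) (hc : 0 < cstar)
    (hZ : ∀ t : ℝ, 0 < t →
      ∫⁻ x, ENNReal.ofReal (Real.exp (-(dist x₀ x ^ 2) / (4 * t))) ∂m
        = ENNReal.ofReal (cstar * t ^ (N / 2))) :
    ∀ s : ℝ, 0 < s →
      Integrable (fun x => Real.exp (-(dist x₀ x ^ 2) * s)) m ∧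
      ∫ x, Real.exp (-(dist x₀ x ^ 2) * s) ∂m = cstar * (4 * s) ^ (-(N / 2)) := by
  intro s hs
  have hts : (0:ℝ) < 1 / (4 * s) := by positivity
  have hZ' := hZ (1 / (4 * s)) hts
  have heq : ∀ x : X, -(dist x₀ x ^ 2) / (4 * (1 / (4 * s))) = -(dist x₀ x ^ 2) * s := by
    intro x; field_simp
  simp only [heq] at hZ'
  have hval : cstar * (1 / (4 * s)) ^ (N / 2) = cstar * (4 * s) ^ (-(N / 2)) := by
    rw [one_div, Real.inv_rpow (by positivity), ← Real.rpow_neg (by positivity)]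
  rw [hval] at hZ'
  have hcont : Continuous fun x : X => Real.exp (-(dist x₀ x ^ 2) * s) := by fun_prop
  have hmeas := hcont.aestronglyMeasurable (μ := m)
  have hnn : 0 ≤ᵐ[m] fun x : X => Real.exp (-(dist x₀ x ^ 2) * s) :=
    Filter.Eventually.of_forall fun x => (Real.exp_pos _).le
  refine ⟨⟨hmeas, ?_⟩, ?_⟩
  · rw [hasFiniteIntegral_iff_ofReal hnn, hZ']
    exact ENNReal.ofReal_lt_top
  · rw [integral_eq_lintegral_of_nonneg_ae hnn hmeas, hZ',
      ENNReal.toReal_ofReal (by positivity)]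

/-- Entropy of the Gaussian-type measure: if `Z(t) = ∫ exp(-d(x₀,x)²/(4t)) dm`
is finite and equals `c* t^{N/2}` for every `t > 0`, then the density
`ρ̂_t = exp(-d(x₀,·)²/(4t))/(c* t^{N/2})` satisfies
`∫ ρ̂_t log ρ̂_t dm = -N/2 - log c* - (N/2) log t`. -/
theorem gaussian_entropy
    {X : Type*} [MetricSpace X] [MeasurableSpace X] [BorelSpace X]
    (m : Measure X) (x₀ : X) (N cstar : ℝ) (hN : 0 < N) (hc : 0 < cstar)
    (hZ : ∀ t : ℝ, 0 < t →
      ∫⁻ x, ENNReal.ofReal (Real.exp (-(dist x₀ x ^ 2) / (4 * t))) ∂m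
        = ENNReal.ofReal (cstar * t ^ (N / 2))) :
    ∀ t : ℝ, 0 < t →
      Integrable
        (fun x => (Real.exp (-(dist x₀ x ^ 2) / (4 * t)) / (cstar * t ^ (N / 2))) *
          Real.log (Real.exp (-(dist x₀ x ^ 2) / (4 * t)) / (cstar * t ^ (N / 2)))) m ∧
      ∫ x, (Real.exp (-(dist x₀ x ^ 2) / (4 * t)) / (cstar * t ^ (N / 2))) *
          Real.log (Real.exp (-(dist x₀ x ^ 2) / (4 * t)) / (cstar * t ^ (N / 2))) ∂m
        = -N / 2 - Real.log cstar - N / 2 * Real.log t := by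
  have key := gaussian_key m x₀ N cstar hc hZ
  intro t ht
  have h4t : (0:ℝ) < 4 * t := by linarith
  set s₀ : ℝ := 1 / (4 * t) with hs₀
  have hs₀pos : 0 < s₀ := by positivity
  -- differentiation under the integral sign at s₀
  set F : ℝ → X → ℝ := fun s x => Real.exp (-(dist x₀ x ^ 2) * s) with hF
  set F' : ℝ → X → ℝ := fun s x => (-(dist x₀ x ^ 2)) * Real.exp (-(dist x₀ x ^ 2) * s) with hF'
  have hFmeas : ∀ s : ℝ, AEStronglyMeasurable (F s) m := fun s =>
    (Continuous.aestronglyMeasurable (by fun_prop))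
  have hF'meas : AEStronglyMeasurable (F' s₀) m :=
    (Continuous.aestronglyMeasurable (by fun_prop))
  have hbound_int : Integrable (fun x : X => (4 / s₀) * Real.exp (-(dist x₀ x ^ 2) * (s₀ / 4))) m :=
    ((key (s₀ / 4) (by positivity)).1.const_mul _)
  have hderiv := hasDerivAt_integral_of_dominated_loc_of_deriv_le
    (F := F) (F' := F') (x₀ := s₀) (s := Metric.ball s₀ (s₀ / 2))
    (bound := fun x : X => (4 / s₀) * Real.exp (-(dist x₀ x ^ 2) * (s₀ / 4)))
    (Metric.ball_mem_nhds _ (by positivity)) (Filter.Eventually.of_forall hFmeas) (key s₀ hs₀pos).1 hF'meas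
    ?_ hbound_int ?_
  rotate_left
  · -- bound
    refine Filter.Eventually.of_forall fun x => fun s hss => ?_
    have hs2 : s₀ / 2 < s := by
      have := abs_lt.1 (by simpa [Real.dist_eq] using hss)
      linarith [this.1]
    have hxnn : (0:ℝ) ≤ dist x₀ x ^ 2 := sq_nonneg _
    simp only [hF', Real.norm_eq_abs, abs_mul, abs_neg, abs_of_nonneg hxnn,
      Real.abs_exp]
    have h1 : Real.exp (-(dist x₀ x ^ 2) * s) ≤ Real.exp (-(dist x₀ x ^ 2) * (s₀ / 2)) := by
      apply Real.exp_le_exp.2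
      nlinarith
    have h2 : dist x₀ x ^ 2 * Real.exp (-(dist x₀ x ^ 2) * (s₀ / 2))
        ≤ (4 / s₀) * Real.exp (-(dist x₀ x ^ 2) * (s₀ / 4)) := by
      have hu : dist x₀ x ^ 2 * (s₀ / 4) ≤ Real.exp (dist x₀ x ^ 2 * (s₀ / 4)) := by
        have := Real.add_one_le_exp (dist x₀ x ^ 2 * (s₀ / 4))
        linarith
      have hexp : Real.exp (-(dist x₀ x ^ 2) * (s₀ / 2))
          = Real.exp (-(dist x₀ x ^ 2) * (s₀ / 4)) / Real.exp (dist x₀ x ^ 2 * (s₀ / 4)) := by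
        rw [← Real.exp_sub]; ring_nf
      rw [hexp]
      have hd : dist x₀ x ^ 2 ≤ 4 / s₀ * Real.exp (dist x₀ x ^ 2 * (s₀ / 4)) := by
        rw [div_mul_eq_mul_div, le_div_iff₀ hs₀pos]
        nlinarith [hu]
      calc dist x₀ x ^ 2 *
            (Real.exp (-(dist x₀ x ^ 2) * (s₀ / 4)) / Real.exp (dist x₀ x ^ 2 * (s₀ / 4)))
          ≤ (4 / s₀ * Real.exp (dist x₀ x ^ 2 * (s₀ / 4))) *
            (Real.exp (-(dist x₀ x ^ 2) * (s₀ / 4)) / Real.exp (dist x₀ x ^ 2 * (s₀ / 4))) :=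
            mul_le_mul_of_nonneg_right hd (by positivity)
        _ = (4 / s₀) * Real.exp (-(dist x₀ x ^ 2) * (s₀ / 4)) := by
            field_simp
    calc dist x₀ x ^ 2 * Real.exp (-(dist x₀ x ^ 2) * s)
        ≤ dist x₀ x ^ 2 * Real.exp (-(dist x₀ x ^ 2) * (s₀ / 2)) := by
          exact mul_le_mul_of_nonneg_left h1 hxnn
      _ ≤ (4 / s₀) * Real.exp (-(dist x₀ x ^ 2) * (s₀ / 4)) := h2
  · -- differentiability
    refine Filter.Eventually.of_forall fun x => fun s _ => ?_
    have h1 : HasDerivAt (fun s : ℝ => -(dist x₀ x ^ 2) * s) (-(dist x₀ x ^ 2)) s := by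
      simpa using (hasDerivAt_id s).const_mul (-(dist x₀ x ^ 2))
    simpa [hF, hF', mul_comm] using h1.exp
  obtain ⟨hF'int, hDeriv⟩ := hderiv
  -- identify the derivative via the explicit formula for the integral
  have hgderiv : HasDerivAt (fun s : ℝ => cstar * (4 * s) ^ (-(N / 2)))
      (cstar * ((-(N / 2)) * (4 * s₀) ^ (-(N / 2) - 1) * 4)) s₀ := by
    have h1 : HasDerivAt (fun s : ℝ => 4 * s) 4 s₀ := by
      simpa using (hasDerivAt_id s₀).const_mul (4:ℝ)
    have h2 := (Real.hasDerivAt_rpow_const (x := 4 * s₀) (p := -(N / 2))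
      (Or.inl (by positivity))).comp s₀ h1
    exact h2.const_mul cstar
  have hEvEq : (fun s : ℝ => ∫ x, F s x ∂m) =ᶠ[nhds s₀]
      (fun s : ℝ => cstar * (4 * s) ^ (-(N / 2))) := by
    filter_upwards [Ioi_mem_nhds hs₀pos] with s hs
    exact (key s hs).2
  have hDeriv2 : HasDerivAt (fun s : ℝ => ∫ x, F s x ∂m)
      (cstar * ((-(N / 2)) * (4 * s₀) ^ (-(N / 2) - 1) * 4)) s₀ :=
    hgderiv.congr_of_eventuallyEq hEvEq
  have hI1' : ∫ x, F' s₀ x ∂m = cstar * ((-(N / 2)) * (4 * s₀) ^ (-(N / 2) - 1) * 4) :=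
    hDeriv.unique hDeriv2
  -- simplify the rpow
  have h4s₀ : 4 * s₀ = t⁻¹ := by rw [hs₀]; field_simp
  have hrpow : (4 * s₀) ^ (-(N / 2) - 1) = t * t ^ (N / 2) := by
    rw [h4s₀, Real.inv_rpow ht.le, ← Real.rpow_neg ht.le]
    rw [show -(-(N / 2) - 1) = N / 2 + 1 by ring, Real.rpow_add ht, Real.rpow_one]
    ring
  -- the two integrals
  have hI1 : ∫ x, (dist x₀ x ^ 2) * Real.exp (-(dist x₀ x ^ 2) * s₀) ∂m
      = cstar * (N / 2) * (t * t ^ (N / 2)) * 4 := by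
    have : ∫ x, (dist x₀ x ^ 2) * Real.exp (-(dist x₀ x ^ 2) * s₀) ∂m
        = - ∫ x, F' s₀ x ∂m := by
      rw [← integral_neg]
      congr 1; funext x; simp [hF']
    rw [this, hI1', hrpow]; ring
  have hI2 : ∫ x, Real.exp (-(dist x₀ x ^ 2) * s₀) ∂m = cstar * t ^ (N / 2) := by
    rw [(key s₀ hs₀pos).2, h4s₀, Real.inv_rpow ht.le, ← Real.rpow_neg ht.le, neg_neg]
  have hI1int : Integrable (fun x => (dist x₀ x ^ 2) * Real.exp (-(dist x₀ x ^ 2) * s₀)) m := by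
    have := hF'int.neg
    refine this.congr (Filter.Eventually.of_forall fun x => ?_)
    simp [hF']
  -- set up the pointwise identity
  set K : ℝ := cstar * t ^ (N / 2) with hK
  have hKpos : 0 < K := by
    have := Real.rpow_pos_of_pos ht (N / 2)
    positivity
  have hpt : ∀ x : X,
      (Real.exp (-(dist x₀ x ^ 2) / (4 * t)) / K) *
        Real.log (Real.exp (-(dist x₀ x ^ 2) / (4 * t)) / K)
      = (-1 / (4 * t * K)) * ((dist x₀ x ^ 2) * Real.exp (-(dist x₀ x ^ 2) * s₀))
        + (-(Real.log K) / K) * Real.exp (-(dist x₀ x ^ 2) * s₀) := by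
    intro x
    have ha : -(dist x₀ x ^ 2) / (4 * t) = -(dist x₀ x ^ 2) * s₀ := by
      rw [hs₀]; ring
    rw [ha, Real.log_div (Real.exp_ne_zero _) hKpos.ne', Real.log_exp, hs₀]
    field_simp
    ring
  constructor
  · refine ((hI1int.const_mul (-1 / (4 * t * K))).add
      ((key s₀ hs₀pos).1.const_mul (-(Real.log K) / K))).congr
      (Filter.Eventually.of_forall fun x => (hpt x).symm)
  · rw [integral_congr_ae (Filter.Eventually.of_forall hpt),
      integral_add (hI1int.const_mul _) ((key s₀ hs₀pos).1.const_mul _),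
      integral_const_mul, integral_const_mul, hI1, hI2]
    have hlogK : Real.log K = Real.log cstar + N / 2 * Real.log t := by
      rw [hK, Real.log_mul hc.ne' (Real.rpow_pos_of_pos ht _).ne', Real.log_rpow ht]
    rw [hlogK, hK]
    have htN : (0:ℝ) < t ^ (N / 2) := Real.rpow_pos_of_pos ht _
    field_simp
    ring
end

section
/- Let (X,d) be a metric space, m a Borel measure on X, x₀ ∈ X a fixed point with 0 < m(B_r(x₀)) < ∞ for all r > 0, where B_r(x₀) is the open ball of radius r about x₀, and let N ≥ 1. Assume m satisfies the Bishop–Gromov inequality of exponent N at x₀, i.e. m(B_R(x₀)) ≤ (R/r)^N m(B_r(x₀)) for all 0 < r < R. Let p : (0,∞) × X → (0,∞) be a function such that for every δ ∈ (0,2) there exists a constant C(δ) ≥ 1 with (1/(C(δ) m(B_{√t}(x₀)))) exp(−d(x₀,x)²/((4−δ)t)) ≤ p(t,x) ≤ (C(δ)/m(B_{√t}(x₀))) exp(−d(x₀,x)²/((4+δ)t)) for all t ∈ (0,1] and all x ∈ X. Then 4t log p(t,x) → −d(x₀,x)² as t ↓ 0, uniformly on every bounded subset of X. -/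
open MeasureTheory Real Filter

open MeasureTheory Real Filter

theorem aux_tlogV {X : Type*} [MetricSpace X] [MeasurableSpace X]
    (m : Measure X) (x₀ : X) (N : ℝ)
    (hball : ∀ r : ℝ, 0 < r → 0 < m (Metric.ball x₀ r) ∧ m (Metric.ball x₀ r) < ⊤)
    (hBG : ∀ r R : ℝ, 0 < r → r < R →
      m (Metric.ball x₀ R) ≤ ENNReal.ofReal ((R / r) ^ N) * m (Metric.ball x₀ r)) :
    Tendsto (fun t => t * Real.log ((m (Metric.ball x₀ (Real.sqrt t))).toReal))
      (nhdsWithin 0 (Set.Ioi (0:ℝ))) (nhds 0) := by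
  set V1 : ℝ := (m (Metric.ball x₀ 1)).toReal with hV1
  have hV1pos : 0 < V1 := ENNReal.toReal_pos (hball 1 one_pos).1.ne' (hball 1 one_pos).2.ne
  have htlog : Tendsto (fun t : ℝ => t * Real.log t) (nhdsWithin 0 (Set.Ioi (0:ℝ))) (nhds 0) := by
    have := Real.continuous_mul_log.tendsto 0
    simpa using this.mono_left nhdsWithin_le_nhds
  have hhigh : Tendsto (fun t : ℝ => t * Real.log V1) (nhdsWithin 0 (Set.Ioi (0:ℝ))) (nhds 0) := by
    have : Tendsto (fun t : ℝ => t * Real.log V1) (nhds 0) (nhds (0 * Real.log V1)) :=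
      tendsto_id.mul_const _
    simpa using this.mono_left nhdsWithin_le_nhds
  have hlow : Tendsto (fun t : ℝ => (N/2) * (t * Real.log t) + t * Real.log V1)
      (nhdsWithin 0 (Set.Ioi (0:ℝ))) (nhds 0) := by
    simpa using (htlog.const_mul (N/2)).add hhigh
  apply tendsto_of_tendsto_of_tendsto_of_le_of_le' hlow hhigh
  · filter_upwards [Ioo_mem_nhdsGT_of_mem (Set.left_mem_Ico.2 one_pos)] with t ht
    obtain ⟨ht0, ht1⟩ := ht
    have hst : 0 < Real.sqrt t := Real.sqrt_pos.2 ht0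
    have hst1 : Real.sqrt t < 1 := by
      rw [show (1:ℝ) = Real.sqrt 1 by simp]
      exact Real.sqrt_lt_sqrt ht0.le ht1
    have hVpos : 0 < (m (Metric.ball x₀ (Real.sqrt t))).toReal :=
      ENNReal.toReal_pos (hball _ hst).1.ne' (hball _ hst).2.ne
    have hbg := hBG (Real.sqrt t) 1 hst hst1
    have hfin : m (Metric.ball x₀ (Real.sqrt t)) ≠ ⊤ := (hball _ hst).2.ne
    have hbg' : V1 ≤ (1 / Real.sqrt t) ^ N * (m (Metric.ball x₀ (Real.sqrt t))).toReal := by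
      have := ENNReal.toReal_mono (ENNReal.mul_ne_top ENNReal.ofReal_ne_top hfin) hbg
      rwa [ENNReal.toReal_mul, ENNReal.toReal_ofReal (by positivity)] at this
    have hpow : (0:ℝ) < (Real.sqrt t) ^ N := Real.rpow_pos_of_pos hst N
    have hge : (Real.sqrt t) ^ N * V1 ≤ (m (Metric.ball x₀ (Real.sqrt t))).toReal := by
      rw [one_div, Real.inv_rpow hst.le] at hbg'
      have := mul_le_mul_of_nonneg_left hbg' hpow.le
      rwa [← mul_assoc, mul_inv_cancel₀ hpow.ne', one_mul] at this
    -- take log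
    have hloglb : (N/2) * Real.log t + Real.log V1 ≤
        Real.log ((m (Metric.ball x₀ (Real.sqrt t))).toReal) := by
      have hl := Real.log_le_log (by positivity) hge
      rw [Real.log_mul hpow.ne' hV1pos.ne', Real.log_rpow hst, Real.log_sqrt ht0.le] at hl
      linarith
    have := mul_le_mul_of_nonneg_left hloglb ht0.le
    calc (N/2) * (t * Real.log t) + t * Real.log V1
        = t * ((N/2) * Real.log t + Real.log V1) := by ring
      _ ≤ _ := this
  · filter_upwards [Ioo_mem_nhdsGT_of_mem (Set.left_mem_Ico.2 one_pos)] with t ht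
    obtain ⟨ht0, ht1⟩ := ht
    have hst : 0 < Real.sqrt t := Real.sqrt_pos.2 ht0
    have hst1 : Real.sqrt t < 1 := by
      rw [show (1:ℝ) = Real.sqrt 1 by simp]
      exact Real.sqrt_lt_sqrt ht0.le ht1
    have hVpos : 0 < (m (Metric.ball x₀ (Real.sqrt t))).toReal :=
      ENNReal.toReal_pos (hball _ hst).1.ne' (hball _ hst).2.ne
    have hle : (m (Metric.ball x₀ (Real.sqrt t))).toReal ≤ V1 := by
      apply ENNReal.toReal_mono (hball 1 one_pos).2.ne
      exact measure_mono (Metric.ball_subset_ball hst1.le)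
    have := Real.log_le_log hVpos hle
    exact mul_le_mul_of_nonneg_left this ht0.le

/-- Varadhan-type short-time asymptotics from two-sided Gaussian heat kernel
bounds and the Bishop–Gromov inequality: `4t log p(t,x) → -d(x₀,x)²` as
`t ↓ 0`, uniformly on every bounded subset of `X`. -/
theorem varadhan_short_time
    {X : Type*} [MetricSpace X] [MeasurableSpace X] [BorelSpace X]
    (m : Measure X) (x₀ : X) (N : ℝ) (hN : 1 ≤ N)
    (hball : ∀ r : ℝ, 0 < r →
      0 < m (Metric.ball x₀ r) ∧ m (Metric.ball x₀ r) < ⊤)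
    (hBG : ∀ r R : ℝ, 0 < r → r < R →
      m (Metric.ball x₀ R) ≤ ENNReal.ofReal ((R / r) ^ N) * m (Metric.ball x₀ r))
    (p : ℝ → X → ℝ) (hp : ∀ t : ℝ, ∀ x : X, 0 < t → 0 < p t x)
    (hbounds : ∀ δ ∈ Set.Ioo (0:ℝ) 2, ∃ Cδ : ℝ, 1 ≤ Cδ ∧
      ∀ t ∈ Set.Ioc (0:ℝ) 1, ∀ x : X,
        (1 / (Cδ * (m (Metric.ball x₀ (Real.sqrt t))).toReal)) *
            Real.exp (-(dist x₀ x ^ 2) / ((4 - δ) * t)) ≤ p t x ∧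
        p t x ≤ (Cδ / (m (Metric.ball x₀ (Real.sqrt t))).toReal) *
            Real.exp (-(dist x₀ x ^ 2) / ((4 + δ) * t))) :
    ∀ B : Set X, Bornology.IsBounded B →
      TendstoUniformlyOn (fun t x => 4 * t * Real.log (p t x))
        (fun x => -(dist x₀ x ^ 2)) (nhdsWithin 0 (Set.Ioi (0:ℝ))) B := by
  intro B hB
  obtain ⟨R, hR⟩ := hB.subset_closedBall x₀
  set D : ℝ := max R 0 with hDdef
  have hD0 : 0 ≤ D := le_max_right _ _
  have hD : ∀ x ∈ B, dist x₀ x ≤ D := by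
    intro x hx
    have := hR hx
    rw [Metric.mem_closedBall, dist_comm] at this
    exact this.trans (le_max_left _ _)
  rw [Metric.tendstoUniformlyOn_iff]
  intro ε hε
  set δ : ℝ := min 1 (ε / (D ^ 2 + 1)) with hδdef
  have hδpos : 0 < δ := lt_min one_pos (by positivity)
  have hδ1 : δ ≤ 1 := min_le_left _ _
  have hδε : δ ≤ ε / (D ^ 2 + 1) := min_le_right _ _
  obtain ⟨C, hC1, hC⟩ := hbounds δ ⟨hδpos, lt_of_le_of_lt hδ1 one_lt_two⟩
  have hlogC : 0 ≤ Real.log C := Real.log_nonneg hC1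
  have hL := aux_tlogV m x₀ N hball hBG
  have hCl : Tendsto (fun t : ℝ => 4 * t * Real.log C) (nhdsWithin 0 (Set.Ioi (0:ℝ)))
      (nhds 0) := by
    have : Tendsto (fun t : ℝ => 4 * t * Real.log C) (nhds 0) (nhds (4 * 0 * Real.log C)) :=
      ((tendsto_id.const_mul 4).mul_const _)
    simpa using this.mono_left nhdsWithin_le_nhds
  have hε3 : (0:ℝ) < ε / 3 := by positivity
  have hε12 : (0:ℝ) < ε / 12 := by positivity
  filter_upwards [Ioo_mem_nhdsGT_of_mem (Set.left_mem_Ico.2 one_pos),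
    NormedAddCommGroup.tendsto_nhds_zero.mp hCl (ε/3) hε3,
    NormedAddCommGroup.tendsto_nhds_zero.mp hL (ε/12) hε12] with t ht hA hLt x hx
  obtain ⟨ht0, ht1⟩ := ht
  set V : ℝ := (m (Metric.ball x₀ (Real.sqrt t))).toReal with hVdef
  have hst : 0 < Real.sqrt t := Real.sqrt_pos.2 ht0
  have hVpos : 0 < V := ENNReal.toReal_pos (hball _ hst).1.ne' (hball _ hst).2.ne
  obtain ⟨hlo, hhi⟩ := hC t ⟨ht0, ht1.le⟩ x
  set d : ℝ := dist x₀ x with hddef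
  have hd0 : 0 ≤ d := dist_nonneg
  have hdD : d ≤ D := hD x hx
  set lp : ℝ := Real.log (p t x) with hlpdef
  -- log bounds
  have hCpos : 0 < C := lt_of_lt_of_le one_pos hC1
  have hup : lp ≤ Real.log C - Real.log V - d ^ 2 / ((4 + δ) * t) := by
    have h := Real.log_le_log (hp t x ht0) hhi
    have e : Real.log (C / V * Real.exp (-(d ^ 2) / ((4 + δ) * t)))
        = Real.log C - Real.log V + -(d ^ 2) / ((4 + δ) * t) := by
      rw [Real.log_mul (by positivity) (Real.exp_ne_zero _),
        Real.log_div hCpos.ne' hVpos.ne', Real.log_exp]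
    rw [e] at h
    have e2 : -(d ^ 2) / ((4 + δ) * t) = -(d ^ 2 / ((4 + δ) * t)) := by ring
    rw [e2] at h
    linarith
  have hlo' : -Real.log C - Real.log V - d ^ 2 / ((4 - δ) * t) ≤ lp := by
    have h := Real.log_le_log (by positivity) hlo
    have e : Real.log (1 / (C * V) * Real.exp (-(d ^ 2) / ((4 - δ) * t)))
        = -(Real.log C + Real.log V) + -(d ^ 2) / ((4 - δ) * t) := by
      rw [Real.log_mul (by positivity) (Real.exp_ne_zero _), one_div, Real.log_inv,
        Real.log_mul hCpos.ne' hVpos.ne', Real.log_exp]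
    rw [e] at h
    have : -(d ^ 2) / ((4 - δ) * t) = -(d ^ 2 / ((4 - δ) * t)) := by ring
    rw [this] at h
    linarith
  -- multiply by 4 t
  have ht4 : (0:ℝ) ≤ 4 * t := by positivity
  have h4δp : (0:ℝ) < 4 + δ := by linarith
  have h4δm : (0:ℝ) < 4 - δ := by linarith
  have key_up : 4 * t * lp + d ^ 2 ≤ 4 * t * Real.log C - 4 * (t * Real.log V)
      + δ * d ^ 2 / (4 + δ) := by
    have h := mul_le_mul_of_nonneg_left hup ht4
    have e : 4 * t * (Real.log C - Real.log V - d ^ 2 / ((4 + δ) * t))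
        = 4 * t * Real.log C - 4 * (t * Real.log V) - 4 * d ^ 2 / (4 + δ) := by
      field_simp
    have e2 : d ^ 2 - 4 * d ^ 2 / (4 + δ) = δ * d ^ 2 / (4 + δ) := by
      field_simp
      ring
    rw [e] at h
    linarith
  have key_lo : -(4 * t * Real.log C) - 4 * (t * Real.log V)
      - δ * d ^ 2 / (4 - δ) ≤ 4 * t * lp + d ^ 2 := by
    have h := mul_le_mul_of_nonneg_left hlo' ht4
    have e : 4 * t * (-Real.log C - Real.log V - d ^ 2 / ((4 - δ) * t))
        = -(4 * t * Real.log C) - 4 * (t * Real.log V) - 4 * d ^ 2 / (4 - δ) := by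
      field_simp
    have e2 : d ^ 2 - 4 * d ^ 2 / (4 - δ) = -(δ * d ^ 2 / (4 - δ)) := by
      field_simp
      ring
    rw [e] at h
    linarith
  -- the δ d² terms are small
  have hδd : δ * d ^ 2 ≤ ε := by
    have h1 : δ * d ^ 2 ≤ δ * D ^ 2 :=
      mul_le_mul_of_nonneg_left (pow_le_pow_left₀ hd0 hdD 2) hδpos.le
    have h2 : δ * D ^ 2 ≤ (ε / (D ^ 2 + 1)) * D ^ 2 :=
      mul_le_mul_of_nonneg_right hδε (by positivity)
    have h3 : (ε / (D ^ 2 + 1)) * D ^ 2 ≤ (ε / (D ^ 2 + 1)) * (D ^ 2 + 1) :=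
      mul_le_mul_of_nonneg_left (by linarith) (by positivity)
    have h4 : (ε / (D ^ 2 + 1)) * (D ^ 2 + 1) = ε := by field_simp
    linarith
  have key3 : δ * d ^ 2 / (4 + δ) ≤ ε / 3 := by
    have h1 : δ * d ^ 2 / (4 + δ) ≤ δ * d ^ 2 / 3 :=
      div_le_div_of_nonneg_left (by positivity) (by norm_num) (by linarith)
    linarith
  have key4 : δ * d ^ 2 / (4 - δ) ≤ ε / 3 := by
    have h1 : δ * d ^ 2 / (4 - δ) ≤ δ * d ^ 2 / 3 :=
      div_le_div_of_nonneg_left (by positivity) (by norm_num) (by linarith)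
    linarith
  rw [Real.norm_eq_abs] at hA hLt
  obtain ⟨hA1, hA2⟩ := abs_lt.mp hA
  obtain ⟨hL1, hL2⟩ := abs_lt.mp hLt
  rw [Real.dist_eq, abs_lt]
  constructor <;> [skip; skip] <;> linarith
end
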